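/- arXiv:1305.3805 — 2 statements merged into one kernel-verified Lean document; each statement's English description precedes it below -/
import Mathlib

section
/- Let X₊, X₋ be bounded nonnegative self-adjoint operators on L²(ℝ³) of the form X₊ = V₊^{1/2}(−Δ)^{-1}V₊^{1/2} and X₋ = V₋^{1/2}(−Δ)^{-1}V₋^{1/2}, where V₊, V₋ ≥ 0 have disjoint supports, and let J be the multiplication operator by sgn(V) where V = V₊ − V₋, X = |V|^{1/2}(−Δ)^{-1}|V|^{1/2}. Then for every φ ∈ L²(ℝ³): √2 ‖φ‖ · ‖(J + X)φ‖ ≥ ⟨φ, (X₊ + 1 − X₋)φ⟩. -/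
open MeasureTheory
noncomputable section

abbrev E3 := EuclideanSpace ℝ (Fin 3)
abbrev L2 := MeasureTheory.Lp ℂ 2 (volume : Measure E3)

/-- The Green's function of `-Δ` on `ℝ³`: kernel of `(-Δ)⁻¹`. -/
def green (x y : E3) : ℝ := 1 / (4 * Real.pi * ‖x - y‖)

namespace BS
open Metric Set ENNReal Filter

lemma green_nonneg (x y : E3) : 0 ≤ green x y := by
  unfold green
  have := Real.pi_pos
  positivity

lemma green_symm (x y : E3) : green x y = green y x := by
  unfold green; rw [norm_sub_rev]

lemma green_meas : Measurable (fun p : E3 × E3 => green p.1 p.2) := by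
  unfold green; simp only [one_div]
  exact (measurable_const.mul ((measurable_fst.sub measurable_snd).norm)).inv

lemma green_meas_right (x : E3) : Measurable (green x) := by
  have h : green x = (fun p : E3 × E3 => green p.1 p.2) ∘ (fun y => (x, y)) := rfl
  rw [h]; exact green_meas.comp (measurable_const.prodMk measurable_id)

lemma integral_cmul (c : ℂ) (f : E3 → ℂ) : ∫ x, c * f x = c * ∫ x, f x := by
  simp_rw [← smul_eq_mul]; exact integral_smul c f

lemma integral_rmul (c : ℝ) (f : E3 → ℝ) : ∫ x, c * f x = c * ∫ x, f x := by
  simp_rw [← smul_eq_mul]; exact integral_smul c f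

lemma norm_inv_locint (R : ℝ) : ∫⁻ z in ball (0 : E3) R, ENNReal.ofReal (‖z‖⁻¹) < ∞ := by
  set μ := (volume : Measure E3).restrict (ball (0 : E3) R) with hμ
  have hmeas : AEMeasurable (fun z : E3 => ‖z‖⁻¹) μ := measurable_norm.inv.aemeasurable
  have hnn : 0 ≤ᵐ[μ] fun z : E3 => ‖z‖⁻¹ := ae_of_all _ fun z => by positivity
  rw [show ∫⁻ z in ball (0 : E3) R, ENNReal.ofReal (‖z‖⁻¹) = ∫⁻ z, ENNReal.ofReal (‖z‖⁻¹) ∂μ from rfl,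
    lintegral_eq_lintegral_meas_le μ hnn hmeas]
  have hb1 : ∀ t : ℝ, μ {a | t ≤ ‖a‖⁻¹} ≤ volume (ball (0 : E3) R) := by
    intro t
    calc μ {a | t ≤ ‖a‖⁻¹} ≤ μ univ := measure_mono (subset_univ _)
      _ = volume (ball (0 : E3) R) := by simp [μ]
  have hb2 : ∀ t : ℝ, 0 < t → μ {a | t ≤ ‖a‖⁻¹} ≤
      ENNReal.ofReal (t⁻¹ ^ 3) * volume (ball (0 : E3) 1) := by
    intro t ht
    have hsub : {a : E3 | t ≤ ‖a‖⁻¹} ⊆ closedBall 0 t⁻¹ := by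
      intro a ha
      simp only [mem_setOf_eq] at ha
      simp only [mem_closedBall_zero_iff]
      by_cases h0 : ‖a‖ = 0
      · rw [h0]; positivity
      · have hpos : 0 < ‖a‖ := lt_of_le_of_ne (norm_nonneg a) (Ne.symm h0)
        have : 0 < ‖a‖⁻¹ := by positivity
        calc ‖a‖ = (‖a‖⁻¹)⁻¹ := by rw [inv_inv]
          _ ≤ t⁻¹ := by gcongr
    calc μ {a | t ≤ ‖a‖⁻¹} ≤ volume (closedBall (0 : E3) t⁻¹) :=
          le_trans (Measure.restrict_le_self _) (measure_mono hsub)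
      _ = ENNReal.ofReal (t⁻¹ ^ 3) * volume (ball (0 : E3) 1) := by
          have := MeasureTheory.Measure.addHaar_closedBall (volume : Measure E3) 0
            (by positivity : (0:ℝ) ≤ t⁻¹)
          simpa using this
  calc ∫⁻ t in Ioi (0:ℝ), μ {a | t ≤ ‖a‖⁻¹}
      ≤ ∫⁻ t in Ioc (0:ℝ) 1 ∪ Ioi 1, μ {a | t ≤ ‖a‖⁻¹} :=
        lintegral_mono_set Ioi_subset_Ioc_union_Ioi
    _ ≤ (∫⁻ t in Ioc (0:ℝ) 1, μ {a | t ≤ ‖a‖⁻¹}) + ∫⁻ t in Ioi (1:ℝ), μ {a | t ≤ ‖a‖⁻¹} :=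
        lintegral_union_le _ _ _
    _ < ∞ := by
        have h1 : (∫⁻ t in Ioc (0:ℝ) 1, μ {a | t ≤ ‖a‖⁻¹}) ≤ volume (ball (0 : E3) R) * 1 := by
          calc (∫⁻ t in Ioc (0:ℝ) 1, μ {a | t ≤ ‖a‖⁻¹})
              ≤ ∫⁻ _ in Ioc (0:ℝ) 1, volume (ball (0 : E3) R) :=
                setLIntegral_mono' measurableSet_Ioc fun t _ => hb1 t
            _ = volume (ball (0 : E3) R) * 1 := by simp [Real.volume_Ioc]
        have h2 : (∫⁻ t in Ioi (1:ℝ), μ {a | t ≤ ‖a‖⁻¹}) ≤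
            (∫⁻ t in Ioi (1:ℝ), ENNReal.ofReal (t⁻¹ ^ 3)) * volume (ball (0 : E3) 1) := by
          rw [← lintegral_mul_const' _ _ measure_ball_lt_top.ne]
          exact setLIntegral_mono' measurableSet_Ioi fun t ht => hb2 t (lt_trans one_pos ht)
        have h3 : (∫⁻ t in Ioi (1:ℝ), ENNReal.ofReal (t⁻¹ ^ 3)) < ∞ := by
          have hio : IntegrableOn (fun t : ℝ => t⁻¹ ^ 3) (Ioi (1:ℝ)) := by
            have := integrableOn_Ioi_rpow_of_lt (a := -3) (by norm_num) (c := (1:ℝ)) one_pos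
            apply this.congr_fun ?_ measurableSet_Ioi
            intro t ht
            have ht0 : (0:ℝ) < t := lt_trans one_pos ht
            show t ^ (-3 : ℝ) = t⁻¹ ^ 3
            rw [show (-3:ℝ) = -((3:ℕ):ℝ) by norm_num, Real.rpow_neg ht0.le,
              Real.rpow_natCast, inv_pow]
          exact hio.setLIntegral_lt_top
        have hlt1 : volume (ball (0 : E3) R) * 1 < ∞ := by
          simpa using measure_ball_lt_top (μ := (volume : Measure E3)) (x := (0:E3)) (r := R)
        exact lt_of_le_of_lt (add_le_add h1 h2)
          (ENNReal.add_lt_top.mpr ⟨hlt1, ENNReal.mul_lt_top h3 measure_ball_lt_top⟩)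

lemma green_ball_lt_top (x : E3) (R : ℝ) :
    ∫⁻ y in ball (0 : E3) R, ENNReal.ofReal (green x y) < ∞ := by
  have hg : ∀ y : E3, green x y = (4 * Real.pi)⁻¹ * ‖x - y‖⁻¹ := fun y => by
    unfold green; rw [one_div, mul_inv]
  calc ∫⁻ y in ball (0 : E3) R, ENNReal.ofReal (green x y)
      = ∫⁻ y in ball (0 : E3) R, ENNReal.ofReal ((4 * Real.pi)⁻¹) * ENNReal.ofReal (‖x - y‖⁻¹) := by
        apply lintegral_congr; intro y
        rw [hg y, ENNReal.ofReal_mul (by positivity)]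
    _ = ENNReal.ofReal ((4 * Real.pi)⁻¹) * ∫⁻ y in ball (0 : E3) R, ENNReal.ofReal (‖x - y‖⁻¹) := by
        rw [lintegral_const_mul' _ _ ENNReal.ofReal_ne_top]
    _ < ∞ := by
        apply ENNReal.mul_lt_top ENNReal.ofReal_lt_top
        -- translate
        have hkey : ∫⁻ y in ball (0 : E3) R, ENNReal.ofReal (‖x - y‖⁻¹) ≤
            ∫⁻ z in ball (0 : E3) (R + ‖x‖), ENNReal.ofReal (‖z‖⁻¹) := by
          rw [← lintegral_indicator measurableSet_ball, ← lintegral_indicator measurableSet_ball]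
          rw [← lintegral_add_right_eq_self
            (fun y => (ball (0:E3) R).indicator (fun y => ENNReal.ofReal (‖x - y‖⁻¹)) y) x]
          apply lintegral_mono
          intro z
          show (ball (0:E3) R).indicator (fun y => ENNReal.ofReal ‖x - y‖⁻¹) (z + x) ≤
            (ball (0:E3) (R + ‖x‖)).indicator (fun z => ENNReal.ofReal ‖z‖⁻¹) z
          by_cases hz : z + x ∈ ball (0 : E3) R
          · rw [indicator_of_mem hz]
            have hz2 : z ∈ ball (0 : E3) (R + ‖x‖) := by
              rw [mem_ball_zero_iff]
              rw [mem_ball_zero_iff] at hz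
              calc ‖z‖ = ‖z + x - x‖ := by rw [add_sub_cancel_right]
                _ ≤ ‖z + x‖ + ‖x‖ := norm_sub_le _ _
                _ < R + ‖x‖ := by linarith
            rw [indicator_of_mem hz2]
            have : x - (z + x) = -z := by abel
            rw [this, norm_neg]
          · rw [indicator_of_notMem hz]
            exact zero_le
        exact lt_of_le_of_lt hkey (norm_inv_locint (R + ‖x‖))


/-- a.e. value of a Birman–Schwinger type operator. -/
lemma X_val (W : E3 → ℝ) (X : L2 →L[ℂ] L2)
    (hX : ∀ φ : L2, ∀ᵐ x : E3, X φ x =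
      ∫ y : E3, ((W x * green x y * W y : ℝ) : ℂ) * φ y)
    (ζ : L2) (m : E3 → ℂ) (hm : ∀ᵐ y : E3 ∂(volume : Measure E3), (W y : ℂ) * ζ y = m y) :
    ∀ᵐ x : E3 ∂(volume : Measure E3),
      X ζ x = (W x : ℂ) * ∫ y : E3, ((green x y : ℝ) : ℂ) * m y := by
  filter_upwards [hX ζ] with x hx
  rw [hx]
  have h1 : ∀ y : E3, ((W x * green x y * W y : ℝ) : ℂ) * ζ y
      = (W x : ℂ) * (((green x y : ℝ) : ℂ) * ((W y : ℂ) * ζ y)) := by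
    intro y; push_cast; ring
  simp_rw [h1]
  rw [integral_congr_ae (g := fun y => (W x : ℂ) * (((green x y : ℝ) : ℂ) * m y))
    (by filter_upwards [hm] with y hy; rw [hy])]
  exact integral_cmul _ _

/-- if the weighted function is not a.e. strongly measurable, the operator kills it. -/
lemma X_zero (W : E3 → ℝ) (X : L2 →L[ℂ] L2)
    (hX : ∀ φ : L2, ∀ᵐ x : E3, X φ x =
      ∫ y : E3, ((W x * green x y * W y : ℝ) : ℂ) * φ y)
    (ζ : L2)
    (hnm : ¬ AEStronglyMeasurable (fun y : E3 => (W y : ℂ) * ζ y) (volume : Measure E3)) :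
    X ζ = 0 := by
  have hzero : ∀ x : E3, (∫ y : E3, ((W x * green x y * W y : ℝ) : ℂ) * ζ y) = 0 := by
    intro x
    by_cases hWx : W x = 0
    · have h0 : ∀ y : E3, ((W x * green x y * W y : ℝ) : ℂ) * ζ y = 0 := by
        intro y; rw [hWx]; push_cast; ring
      simp only [h0, integral_zero]
    · apply integral_undef
      intro hint
      apply hnm
      have haesm := hint.aestronglyMeasurable
      have hmeas : Measurable (fun y : E3 => (((W x)⁻¹ * (4 * Real.pi * ‖x - y‖) : ℝ) : ℂ)) := by
        apply Complex.measurable_ofReal.comp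
        exact measurable_const.mul (measurable_const.mul (measurable_const.sub measurable_id).norm)
      have h2 : AEStronglyMeasurable (fun y : E3 =>
          (((W x)⁻¹ * (4 * Real.pi * ‖x - y‖) : ℝ) : ℂ) *
            (((W x * green x y * W y : ℝ) : ℂ) * ζ y)) volume :=
        hmeas.aestronglyMeasurable.mul haesm
      apply h2.congr
      have hne : ∀ᵐ y : E3 ∂(volume : Measure E3), y ≠ x := by
        have h0 : (volume : Measure E3) {x} = 0 := measure_singleton x
        filter_upwards [measure_eq_zero_iff_ae_notMem.mp h0] with y hy
        simpa using hy
      filter_upwards [hne] with y hy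
      have hnorm : (0:ℝ) < 4 * Real.pi * ‖x - y‖ := by
        have : x - y ≠ 0 := sub_ne_zero.mpr (Ne.symm hy)
        have h1 : (0:ℝ) < ‖x - y‖ := norm_pos_iff.mpr this
        have := Real.pi_pos
        positivity
      have hreal : (W x)⁻¹ * (4 * Real.pi * ‖x - y‖) * (W x * green x y * W y) = W y := by
        unfold green; field_simp; exact mul_div_cancel_left₀ _ (norm_ne_zero_iff.mpr (sub_ne_zero.mpr (Ne.symm hy)))
      calc (((W x)⁻¹ * (4 * Real.pi * ‖x - y‖) : ℝ) : ℂ) * (((W x * green x y * W y : ℝ) : ℂ) * ζ y)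
          = (((W x)⁻¹ * (4 * Real.pi * ‖x - y‖) * (W x * green x y * W y) : ℝ) : ℂ) * ζ y := by
            push_cast; ring
        _ = (W y : ℂ) * ζ y := by rw [hreal]
  refine MeasureTheory.Lp.ext ?_
  have h1 := hX ζ
  filter_upwards [h1, MeasureTheory.Lp.coeFn_zero (E := ℂ) (p := 2) (μ := (volume : Measure E3))]
    with x hx h0
  rw [hx, hzero x, h0]; rfl

/-- a.e. nonnegative real valued -/
def nn (a : L2) : Prop := ∀ᵐ x : E3 ∂(volume : Measure E3), 0 ≤ (a x).re ∧ (a x).im = 0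

lemma exists_decomp (ζ : L2) : ∃ a b c d : L2,
    nn a ∧ nn b ∧ nn c ∧ nn d ∧ ζ = a - b + Complex.I • c - Complex.I • d := by
  have mk : ∀ u : ℂ → ℝ, Measurable u → (∀ z, |u z| ≤ ‖z‖) → (∀ z, 0 ≤ u z) →
      ∃ a : L2, nn a ∧ (⇑a =ᵐ[(volume : Measure E3)] fun x => ((u (ζ x) : ℝ) : ℂ)) := by
    intro u hu hb hpos
    have haesm : AEStronglyMeasurable (fun x : E3 => ((u (ζ x) : ℝ) : ℂ)) volume :=
      (Complex.measurable_ofReal.comp_aemeasurable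
        (hu.comp_aemeasurable (Lp.aestronglyMeasurable ζ).aemeasurable)).aestronglyMeasurable
    have hmem : MemLp (fun x : E3 => ((u (ζ x) : ℝ) : ℂ)) 2 volume := by
      refine MemLp.of_le (Lp.memLp ζ) haesm (ae_of_all _ fun x => ?_)
      rw [Complex.norm_real]
      calc ‖u (ζ x)‖ = |u (ζ x)| := rfl
        _ ≤ ‖ζ x‖ := hb _
        _ = ‖ζ x‖ := rfl
    refine ⟨hmem.toLp _, ?_, hmem.coeFn_toLp⟩
    filter_upwards [hmem.coeFn_toLp] with x hx
    rw [hx]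
    constructor
    · simpa using hpos (ζ x)
    · simp
  obtain ⟨a, hna, hva⟩ := mk (fun z => max z.re 0)
    (Complex.measurable_re.max measurable_const)
    (fun z => by
      have h1 : |max z.re 0| ≤ |z.re| := by
        rw [abs_of_nonneg (le_max_right _ _)]
        exact max_le (le_abs_self _) (abs_nonneg _)
      exact h1.trans (Complex.abs_re_le_norm z))
    (fun z => le_max_right _ _)
  obtain ⟨b, hnb, hvb⟩ := mk (fun z => max (-z.re) 0)
    ((measurable_neg.comp Complex.measurable_re).max measurable_const)
    (fun z => by
      have h1 : |max (-z.re) 0| ≤ |z.re| := by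
        rw [abs_of_nonneg (le_max_right _ _)]
        exact max_le (by simpa using neg_le_abs z.re) (abs_nonneg _)
      exact h1.trans (Complex.abs_re_le_norm z))
    (fun z => le_max_right _ _)
  obtain ⟨c, hnc, hvc⟩ := mk (fun z => max z.im 0)
    (Complex.measurable_im.max measurable_const)
    (fun z => by
      have h1 : |max z.im 0| ≤ |z.im| := by
        rw [abs_of_nonneg (le_max_right _ _)]
        exact max_le (le_abs_self _) (abs_nonneg _)
      exact h1.trans (Complex.abs_im_le_norm z))
    (fun z => le_max_right _ _)
  obtain ⟨d, hnd, hvd⟩ := mk (fun z => max (-z.im) 0)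
    ((measurable_neg.comp Complex.measurable_im).max measurable_const)
    (fun z => by
      have h1 : |max (-z.im) 0| ≤ |z.im| := by
        rw [abs_of_nonneg (le_max_right _ _)]
        exact max_le (by simpa using neg_le_abs z.im) (abs_nonneg _)
      exact h1.trans (Complex.abs_im_le_norm z))
    (fun z => le_max_right _ _)
  refine ⟨a, b, c, d, hna, hnb, hnc, hnd, ?_⟩
  symm
  apply MeasureTheory.Lp.ext
  have h1 : ⇑(a - b + Complex.I • c - Complex.I • d) =ᵐ[(volume : Measure E3)]
      fun x => a x - b x + Complex.I * c x - Complex.I * d x := by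
    filter_upwards [Lp.coeFn_sub (a - b + Complex.I • c) (Complex.I • d),
      Lp.coeFn_add (a - b) (Complex.I • c), Lp.coeFn_sub a b,
      Lp.coeFn_smul Complex.I c, Lp.coeFn_smul Complex.I d] with x h1 h2 h3 h4 h5
    rw [h1]; simp only [Pi.sub_apply]; rw [h2]; simp only [Pi.add_apply]
    rw [h3, h4, h5]; simp only [Pi.sub_apply, Pi.smul_apply, smul_eq_mul]
  filter_upwards [h1, hva, hvb, hvc, hvd] with x h1 h2 h3 h4 h5
  rw [h1, h2, h3, h4, h5]
  apply Complex.ext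
  · simp [max_zero_sub_max_neg_zero_eq_self]
  · simp [max_zero_sub_max_neg_zero_eq_self]


set_option maxHeartbeats 1000000 in
lemma symm_nonneg (W : E3 → ℝ) (hW : ∀ x, 0 ≤ W x) (X : L2 →L[ℂ] L2)
    (hX : ∀ φ : L2, ∀ᵐ x : E3, X φ x =
      ∫ y : E3, ((W x * green x y * W y : ℝ) : ℂ) * φ y)
    (ζ₁ ζ₂ : L2) (h₁ : nn ζ₁) (h₂ : nn ζ₂) :
    (inner ℂ ζ₁ (X ζ₂) : ℂ) = (starRingEnd ℂ) (inner ℂ ζ₂ (X ζ₁) : ℂ) := by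
  classical
  by_cases hA : AEStronglyMeasurable (fun y : E3 => (W y : ℂ) * ζ₁ y) volume ∧
      AEStronglyMeasurable (fun y : E3 => (W y : ℂ) * ζ₂ y) volume
  swap
  · -- non-measurable case : both images vanish
    have hz : X ζ₁ = 0 ∧ X ζ₂ = 0 := by
      have haddm : ∀ (η θ : L2),
          AEStronglyMeasurable (fun y : E3 => (W y : ℂ) * (η + θ) y) volume →
          AEStronglyMeasurable (fun y : E3 => (W y : ℂ) * η y) volume →
          AEStronglyMeasurable (fun y : E3 => (W y : ℂ) * θ y) volume := by
        intro η θ hsum hη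
        have h' : AEStronglyMeasurable (fun y : E3 => (W y:ℂ) * η y + (W y:ℂ) * θ y) volume := by
          apply hsum.congr
          filter_upwards [Lp.coeFn_add η θ] with y hy
          rw [hy]; simp only [Pi.add_apply]; ring
        apply (h'.sub hη).congr
        apply ae_of_all; intro y; simp only [Pi.sub_apply]; ring
      by_cases hA1 : AEStronglyMeasurable (fun y : E3 => (W y : ℂ) * ζ₁ y) volume
      · have hA2 : ¬ AEStronglyMeasurable (fun y : E3 => (W y : ℂ) * ζ₂ y) volume :=
          fun h => hA ⟨hA1, h⟩
        have h2z := X_zero W X hX ζ₂ hA2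
        have hsz : X (ζ₁ + ζ₂) = 0 := by
          apply X_zero W X hX
          intro h
          exact hA2 (haddm ζ₁ ζ₂ h hA1)
        have h1z : X ζ₁ = 0 := by
          have h := hsz; rw [map_add, h2z, add_zero] at h; exact h
        exact ⟨h1z, h2z⟩
      · have h1z := X_zero W X hX ζ₁ hA1
        refine ⟨h1z, ?_⟩
        by_cases hA2 : AEStronglyMeasurable (fun y : E3 => (W y : ℂ) * ζ₂ y) volume
        · have hsz : X (ζ₁ + ζ₂) = 0 := by
            apply X_zero W X hX
            intro h
            have hsum' : AEStronglyMeasurable (fun y : E3 => (W y : ℂ) * (ζ₂ + ζ₁) y) volume := by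
              apply h.congr
              filter_upwards [Lp.coeFn_add ζ₁ ζ₂, Lp.coeFn_add ζ₂ ζ₁] with y hy hy'
              rw [hy, hy']; simp only [Pi.add_apply]; ring
            exact hA1 (haddm ζ₂ ζ₁ hsum' hA2)
          have h := hsz; rw [map_add, h1z, zero_add] at h; exact h
        · exact X_zero W X hX ζ₂ hA2
    rw [hz.1, hz.2]
    simp
  obtain ⟨hA1, hA2⟩ := hA
  -- measurable nonnegative representatives of W * ζᵢ
  have getrep : ∀ ζ : L2, nn ζ →
      AEStronglyMeasurable (fun y : E3 => (W y : ℂ) * ζ y) volume →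
      ∃ q : E3 → ℝ, Measurable q ∧ (∀ y, 0 ≤ q y) ∧
        (∀ᵐ y : E3 ∂(volume : Measure E3), (W y : ℂ) * ζ y = ((q y : ℝ) : ℂ)) := by
    intro ζ hnnζ hAζ
    have hval : ∀ᵐ y : E3 ∂(volume : Measure E3),
        (W y : ℂ) * ζ y = ((((W y : ℂ) * ζ y).re : ℝ) : ℂ) ∧ 0 ≤ ((W y : ℂ) * ζ y).re := by
      filter_upwards [hnnζ] with y hy
      have him : ((W y : ℂ) * ζ y).im = 0 := by
        simp [Complex.mul_im, hy.2]
      constructor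
      · apply Complex.ext <;> simp [him]
      · rw [Complex.mul_re]
        simp only [Complex.ofReal_re, Complex.ofReal_im, zero_mul, sub_zero]
        exact mul_nonneg (hW y) hy.1
    set nf : E3 → ℝ := fun y => ((W y : ℂ) * ζ y).re with hnf
    have hnfm : AEStronglyMeasurable nf volume :=
      (Complex.measurable_re.comp_aemeasurable hAζ.aemeasurable).aestronglyMeasurable
    refine ⟨fun y => max (hnfm.mk nf y) 0, hnfm.measurable_mk.max measurable_const,
      fun y => le_max_right _ _, ?_⟩
    filter_upwards [hval, hnfm.ae_eq_mk] with y hy hmk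
    have h0 : 0 ≤ hnfm.mk nf y := by rw [← hmk]; exact hy.2
    rw [max_eq_left h0, ← hmk]
    exact hy.1
  obtain ⟨q₁, hq₁m, hq₁nn, hq₁⟩ := getrep ζ₁ h₁ hA1
  obtain ⟨q₂, hq₂m, hq₂nn, hq₂⟩ := getrep ζ₂ h₂ hA2
  -- generic pairing values
  have pairval : ∀ (ξ η : L2) (nξ nη : E3 → ℝ), Measurable nη → (∀ y, 0 ≤ nη y) →
      (∀ᵐ y : E3 ∂(volume : Measure E3), (W y:ℂ) * ξ y = ((nξ y : ℝ):ℂ)) →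
      (∀ᵐ y : E3 ∂(volume : Measure E3), (W y:ℂ) * η y = ((nη y : ℝ):ℂ)) →
      ((inner ℂ ξ (X η) : ℂ) = ((∫ x, nξ x * (∫ y, green x y * nη y) : ℝ) : ℂ))
      ∧ Integrable (fun x => nξ x * (∫ y, green x y * nη y)) volume := by
    intro ξ η nξ nη hηm hηnn hWξ hWη
    have hXv : ∀ᵐ x : E3 ∂(volume : Measure E3),
        X η x = (W x:ℂ) * ((∫ y, green x y * nη y : ℝ) : ℂ) := by
      filter_upwards [X_val W X hX η (fun y => ((nη y : ℝ):ℂ)) hWη] with x hx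
      rw [hx]; congr 1
      exact (integral_congr_ae (ae_of_all _ fun y : E3 =>
        show ((green x y : ℝ) : ℂ) * ((nη y : ℝ):ℂ) = ((green x y * nη y : ℝ) : ℂ) by
          push_cast; ring)).trans integral_ofReal
    have haeint : ∀ᵐ x : E3 ∂(volume : Measure E3),
        (starRingEnd ℂ) (ξ x) * (X η) x = ((nξ x * (∫ y, green x y * nη y) : ℝ) : ℂ) := by
      filter_upwards [hXv, hWξ] with x h1 h2
      rw [h1]
      have h3 : (W x:ℂ) * (starRingEnd ℂ) (ξ x) = ((nξ x : ℝ):ℂ) := by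
        have h4 := congrArg (starRingEnd ℂ) h2
        rw [map_mul, Complex.conj_ofReal, Complex.conj_ofReal] at h4
        exact h4
      calc (starRingEnd ℂ) (ξ x) * ((W x:ℂ) * ((∫ y, green x y * nη y : ℝ) : ℂ))
          = ((W x:ℂ) * (starRingEnd ℂ) (ξ x)) * ((∫ y, green x y * nη y : ℝ) : ℂ) := by ring
        _ = ((nξ x : ℝ):ℂ) * ((∫ y, green x y * nη y : ℝ) : ℂ) := by rw [h3]
        _ = ((nξ x * (∫ y, green x y * nη y) : ℝ) : ℂ) := by push_cast; ring
    constructor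
    · rw [MeasureTheory.L2.inner_def]
      simp_rw [RCLike.inner_apply']
      exact (integral_congr_ae haeint).trans integral_ofReal
    · have h0 := MeasureTheory.L2.integrable_inner (𝕜 := ℂ) ξ (X η)
      simp_rw [RCLike.inner_apply'] at h0
      have h1 : Integrable (fun x => ((nξ x * (∫ y, green x y * nη y) : ℝ) : ℂ)) volume :=
        h0.congr haeint
      have h2 := h1.re
      simpa using h2
  obtain ⟨hip₁₂, hInt₁₂⟩ := pairval ζ₁ ζ₂ q₁ q₂ hq₂m hq₂nn hq₁ hq₂
  obtain ⟨hip₂₁, hInt₂₁⟩ := pairval ζ₂ ζ₁ q₂ q₁ hq₁m hq₁nn hq₂ hq₁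
  suffices hAB : (∫ x, q₁ x * (∫ y, green x y * q₂ y)) = ∫ x, q₂ x * (∫ y, green x y * q₁ y) by
    rw [hip₁₂, hip₂₁, Complex.conj_ofReal, hAB]
  -- measurability and lintegral form of the inner integrals
  have hKmeas : ∀ (g : E3 → ℝ), Measurable g →
      Measurable (fun x => ∫⁻ y, ENNReal.ofReal (green x y * g y)) := by
    intro g hg
    exact Measurable.lintegral_prod_right'
      (f := fun p : E3 × E3 => ENNReal.ofReal (green p.1 p.2 * g p.2))
      ((green_meas.mul (hg.comp measurable_snd)).ennreal_ofReal)
  have hJK : ∀ (g : E3 → ℝ), Measurable g → (∀ y, 0 ≤ g y) → ∀ x : E3,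
      (∫ y, green x y * g y) = (∫⁻ y, ENNReal.ofReal (green x y * g y)).toReal := by
    intro g hg hgnn x
    exact integral_eq_lintegral_of_nonneg_ae
      (ae_of_all _ fun y => mul_nonneg (green_nonneg _ _) (hgnn y))
      ((green_meas_right x).mul hg).aestronglyMeasurable
  set K₂ : E3 → ℝ≥0∞ := fun x => ∫⁻ y, ENNReal.ofReal (green x y * q₂ y) with hK₂def
  by_cases hL : (∫⁻ x, ENNReal.ofReal (q₁ x) * K₂ x) = ∞
  · -- divergent case : contradiction with boundedness of X
    exfalso
    have hK₂meas : Measurable K₂ := hKmeas q₂ hq₂m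
    set S : Set E3 := {x | 0 < q₁ x ∧ K₂ x = ∞} with hSdef
    have hSmeas : MeasurableSet S := by
      have hh1 : MeasurableSet {x : E3 | 0 < q₁ x} := measurableSet_lt measurable_const hq₁m
      have hh2 : MeasurableSet {x : E3 | K₂ x = ∞} := hK₂meas (measurableSet_singleton ∞)
      exact hh1.inter hh2
    have hSpos : volume S ≠ 0 := by
      intro h0
      refine absurd hL ?_
      have hfin : (∫⁻ x, ‖q₁ x * (∫ y, green x y * q₂ y)‖ₑ) < ∞ := hInt₁₂.2
      have hcong : ∀ᵐ x : E3 ∂(volume : Measure E3),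
          ENNReal.ofReal (q₁ x) * K₂ x = ‖q₁ x * (∫ y, green x y * q₂ y)‖ₑ := by
        filter_upwards [measure_eq_zero_iff_ae_notMem.mp h0] with x hx
        by_cases hz : q₁ x = 0
        · simp [hz]
        · have hpos : 0 < q₁ x := lt_of_le_of_ne (hq₁nn x) (Ne.symm hz)
          have hKfin : K₂ x ≠ ∞ := fun hK => hx ⟨hpos, hK⟩
          rw [hJK q₂ hq₂m hq₂nn x]
          rw [Real.enorm_eq_ofReal (mul_nonneg (hq₁nn x) ENNReal.toReal_nonneg)]
          rw [ENNReal.ofReal_mul (hq₁nn x), ENNReal.ofReal_toReal hKfin]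
      rw [lintegral_congr_ae hcong]
      exact hfin.ne
    have hcover : S ⊆ ⋃ n : ℕ, (S ∩ {x | 1/((n:ℝ)+1) ≤ q₁ x} ∩ ball (0:E3) ((n:ℝ)+1)) := by
      intro x hx
      obtain ⟨n1, hn1⟩ := exists_nat_gt (1 / q₁ x)
      obtain ⟨n2, hn2⟩ := exists_nat_gt ‖x‖
      refine mem_iUnion.mpr ⟨max n1 n2, ⟨hx, ?_⟩, ?_⟩
      · have hpos := hx.1
        have hc1 : (n1:ℝ) ≤ ((max n1 n2 : ℕ) : ℝ) := by exact_mod_cast Nat.le_max_left n1 n2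
        have hN1 : (0:ℝ) < ((max n1 n2 : ℕ):ℝ) + 1 := by positivity
        show 1/(((max n1 n2 : ℕ):ℝ)+1) ≤ q₁ x
        rw [div_le_iff₀ hN1]
        have h1' : 1 / q₁ x < ((max n1 n2 : ℕ):ℝ) + 1 := by linarith
        have h2' := (div_lt_iff₀ hpos).mp h1'
        nlinarith
      · show x ∈ ball (0:E3) (((max n1 n2 : ℕ):ℝ)+1)
        rw [mem_ball_zero_iff]
        have hc2 : (n2:ℝ) ≤ ((max n1 n2 : ℕ) : ℝ) := by exact_mod_cast Nat.le_max_right n1 n2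
        linarith
    obtain ⟨nd, hS'⟩ : ∃ n : ℕ,
        volume (S ∩ {x | 1/((n:ℝ)+1) ≤ q₁ x} ∩ ball (0:E3) ((n:ℝ)+1)) ≠ 0 := by
      by_contra h; push_neg at h
      exact hSpos (measure_mono_null hcover (by simpa using measure_iUnion_null h))
    set de : ℝ := 1/((nd:ℝ)+1) with hdedef
    have hdepos : 0 < de := by positivity
    set S' : Set E3 := S ∩ {x | de ≤ q₁ x} ∩ ball (0:E3) ((nd:ℝ)+1) with hS'def
    have hS'meas : MeasurableSet S' :=
      (hSmeas.inter (measurableSet_le measurable_const hq₁m)).inter measurableSet_ball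
    have mkInd : ∀ (A : Set E3), MeasurableSet A → ∀ ζ : L2,
        ∃ ξ : L2, (⇑ξ =ᵐ[(volume : Measure E3)] A.indicator ⇑ζ) ∧ ‖ξ‖ ≤ ‖ζ‖ := by
      intro A hA ζ
      have haesm := (Lp.aestronglyMeasurable ζ).indicator hA
      have hmem : MemLp (A.indicator ⇑ζ) 2 (volume : Measure E3) :=
        MemLp.of_le (Lp.memLp ζ) haesm (ae_of_all _ fun x => norm_indicator_le_norm_self _ _)
      refine ⟨hmem.toLp _, hmem.coeFn_toLp, ?_⟩
      rw [MeasureTheory.Lp.norm_toLp, MeasureTheory.Lp.norm_def]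
      exact ENNReal.toReal_mono (Lp.eLpNorm_ne_top ζ)
        (eLpNorm_mono_ae (ae_of_all _ fun x => norm_indicator_le_norm_self _ _))
    obtain ⟨ξ₁, hξ₁v, hξ₁n⟩ := mkInd S' hS'meas ζ₁
    set AN : ℕ → Set E3 := fun N => {y | q₂ y ≤ (N:ℝ)} ∩ ball (0:E3) (N:ℝ) with hANdef
    have hANmeas : ∀ N, MeasurableSet (AN N) := fun N =>
      (measurableSet_le hq₂m measurable_const).inter measurableSet_ball
    have hANmono : ∀ N M : ℕ, N ≤ M → AN N ⊆ AN M := by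
      intro N M h y hy
      have hNM : ((N:ℕ):ℝ) ≤ ((M:ℕ):ℝ) := by exact_mod_cast h
      exact ⟨le_trans hy.1 hNM, lt_of_lt_of_le hy.2 hNM⟩
    have hmk2 := fun N => mkInd (AN N) (hANmeas N) ζ₂
    choose ξ₂ hξ₂v hξ₂n using hmk2
    have hWξ₁ : ∀ᵐ y : E3 ∂(volume : Measure E3),
        (W y:ℂ) * ξ₁ y = ((S'.indicator q₁ y : ℝ):ℂ) := by
      filter_upwards [hξ₁v, hq₁] with y hy1 hy2
      rw [hy1]
      by_cases hy : y ∈ S'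
      · rw [indicator_of_mem hy, indicator_of_mem hy]; exact hy2
      · rw [indicator_of_notMem hy, indicator_of_notMem hy]; simp
    have hWξ₂ : ∀ N : ℕ, ∀ᵐ y : E3 ∂(volume : Measure E3),
        (W y:ℂ) * (ξ₂ N) y = (((AN N).indicator q₂ y : ℝ):ℂ) := by
      intro N
      filter_upwards [hξ₂v N, hq₂] with y hy1 hy2
      rw [hy1]
      by_cases hy : y ∈ AN N
      · rw [indicator_of_mem hy, indicator_of_mem hy]; exact hy2
      · rw [indicator_of_notMem hy, indicator_of_notMem hy]; simp
    have hq₁innS : ∀ x, 0 ≤ S'.indicator q₁ x := fun x => indicator_nonneg (fun y _ => hq₁nn y) x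
    have hq₂innA : ∀ N, ∀ y, 0 ≤ (AN N).indicator q₂ y :=
      fun N y => indicator_nonneg (fun y _ => hq₂nn y) y
    have hq₂mA : ∀ N, Measurable ((AN N).indicator q₂) := fun N => hq₂m.indicator (hANmeas N)
    have hpair := fun N : ℕ => pairval ξ₁ (ξ₂ N) (S'.indicator q₁) ((AN N).indicator q₂)
      (hq₂mA N) (hq₂innA N) hWξ₁ (hWξ₂ N)
    set KN : ℕ → E3 → ℝ≥0∞ :=
      fun N x => ∫⁻ y, ENNReal.ofReal (green x y * (AN N).indicator q₂ y) with hKNdef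
    have hKNmeas : ∀ N, Measurable (KN N) := fun N => hKmeas _ (hq₂mA N)
    have hKNfin : ∀ N x, KN N x ≠ ∞ := by
      intro N x
      have hle : ∀ y, ENNReal.ofReal (green x y * (AN N).indicator q₂ y) ≤
          (ball (0:E3) (N:ℝ)).indicator (fun y => ENNReal.ofReal (green x y * N)) y := by
        intro y
        by_cases hy : y ∈ AN N
        · rw [indicator_of_mem hy, indicator_of_mem hy.2]
          exact ENNReal.ofReal_le_ofReal (mul_le_mul_of_nonneg_left hy.1 (green_nonneg x y))
        · rw [indicator_of_notMem hy, mul_zero, ENNReal.ofReal_zero]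
          exact zero_le
      refine LT.lt.ne ?_
      calc KN N x ≤ ∫⁻ y, (ball (0:E3) (N:ℝ)).indicator
            (fun y => ENNReal.ofReal (green x y * N)) y := lintegral_mono hle
        _ = ∫⁻ y in ball (0:E3) (N:ℝ), ENNReal.ofReal (green x y * N) :=
            lintegral_indicator measurableSet_ball _
        _ = ∫⁻ y in ball (0:E3) (N:ℝ), ENNReal.ofReal (green x y) * ENNReal.ofReal (N:ℝ) := by
            apply lintegral_congr; intro y; rw [ENNReal.ofReal_mul (green_nonneg x y)]
        _ = (∫⁻ y in ball (0:E3) (N:ℝ), ENNReal.ofReal (green x y)) * ENNReal.ofReal (N:ℝ) :=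
            lintegral_mul_const' _ _ ENNReal.ofReal_ne_top
        _ < ∞ := ENNReal.mul_lt_top (green_ball_lt_top x N) ENNReal.ofReal_lt_top
    set C : ℝ := ‖ζ₁‖ * (‖X‖ * ‖ζ₂‖) with hCdef
    have hGle : ∀ N : ℕ, (∫⁻ x, ENNReal.ofReal (S'.indicator q₁ x) * KN N x) ≤
        ENNReal.ofReal C := by
      intro N
      obtain ⟨hipN, hIntN⟩ := hpair N
      have hJrw : ∀ x : E3, (∫ y, green x y * (AN N).indicator q₂ y) = (KN N x).toReal :=
        hJK _ (hq₂mA N) (hq₂innA N)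
      have hfinN : (∫⁻ x, ENNReal.ofReal (S'.indicator q₁ x) * KN N x) ≠ ∞ := by
        have h2 := hIntN.2
        have hcong : ∀ x : E3,
            (‖S'.indicator q₁ x * (∫ y, green x y * (AN N).indicator q₂ y)‖ₑ : ℝ≥0∞)
            = ENNReal.ofReal (S'.indicator q₁ x) * KN N x := by
          intro x
          rw [hJrw x]
          rw [Real.enorm_eq_ofReal (mul_nonneg (hq₁innS x) ENNReal.toReal_nonneg)]
          rw [ENNReal.ofReal_mul (hq₁innS x), ENNReal.ofReal_toReal (hKNfin N x)]
        rw [show (∫⁻ x, ENNReal.ofReal (S'.indicator q₁ x) * KN N x)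
            = ∫⁻ x, ‖S'.indicator q₁ x * (∫ y, green x y * (AN N).indicator q₂ y)‖ₑ from
          (lintegral_congr hcong).symm]
        exact h2.ne
      have hval : (∫ x, S'.indicator q₁ x * (∫ y, green x y * (AN N).indicator q₂ y))
          = (∫⁻ x, ENNReal.ofReal (S'.indicator q₁ x) * KN N x).toReal := by
        have hmJ : Measurable fun x => (∫ y, green x y * (AN N).indicator q₂ y) := by
          have : (fun x => (∫ y, green x y * (AN N).indicator q₂ y))
              = fun x => (KN N x).toReal := funext hJrw
          rw [this]
          exact (hKNmeas N).ennreal_toReal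
        rw [integral_eq_lintegral_of_nonneg_ae
          (ae_of_all _ fun x => mul_nonneg (hq₁innS x)
            (integral_nonneg fun y => mul_nonneg (green_nonneg x y) (hq₂innA N y)))
          ((hq₁m.indicator hS'meas).mul hmJ).aestronglyMeasurable]
        congr 1
        apply lintegral_congr; intro x
        rw [hJrw x, ENNReal.ofReal_mul (hq₁innS x), ENNReal.ofReal_toReal (hKNfin N x)]
      have hbound : (∫⁻ x, ENNReal.ofReal (S'.indicator q₁ x) * KN N x).toReal ≤ C := by
        rw [← hval]
        have hstep1 : (∫ x, S'.indicator q₁ x * (∫ y, green x y * (AN N).indicator q₂ y))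
            ≤ ‖(inner ℂ ξ₁ (X (ξ₂ N)) : ℂ)‖ := by
          rw [hipN]
          calc (∫ x, S'.indicator q₁ x * (∫ y, green x y * (AN N).indicator q₂ y))
              ≤ |∫ x, S'.indicator q₁ x * (∫ y, green x y * (AN N).indicator q₂ y)| :=
                le_abs_self _
            _ = ‖((∫ x, S'.indicator q₁ x *
                  (∫ y, green x y * (AN N).indicator q₂ y) : ℝ) : ℂ)‖ := by
                rw [Complex.norm_real]; rfl
        calc (∫ x, S'.indicator q₁ x * (∫ y, green x y * (AN N).indicator q₂ y))
            ≤ ‖(inner ℂ ξ₁ (X (ξ₂ N)) : ℂ)‖ := hstep1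
          _ ≤ ‖ξ₁‖ * ‖X (ξ₂ N)‖ := norm_inner_le_norm _ _
          _ ≤ ‖ξ₁‖ * (‖X‖ * ‖ξ₂ N‖) :=
              mul_le_mul_of_nonneg_left (X.le_opNorm _) (norm_nonneg _)
          _ ≤ C := by
              rw [hCdef]
              exact mul_le_mul hξ₁n
                (mul_le_mul_of_nonneg_left (hξ₂n N) (norm_nonneg _))
                (by positivity) (norm_nonneg _)
      exact (ENNReal.le_ofReal_iff_toReal_le hfinN (by positivity)).mpr hbound
    have hsup : (⨆ N : ℕ, ∫⁻ x, ENNReal.ofReal (S'.indicator q₁ x) * KN N x)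
        = ∫⁻ x, ENNReal.ofReal (S'.indicator q₁ x) * K₂ x := by
      have hmono : ∀ x : E3, Monotone (fun N => KN N x) := by
        intro x N M h
        apply lintegral_mono; intro y
        apply ENNReal.ofReal_le_ofReal
        apply mul_le_mul_of_nonneg_left ?_ (green_nonneg x y)
        exact indicator_le_indicator_of_subset (hANmono N M h) (fun y => hq₂nn y) y
      have hKsup : ∀ x : E3, (⨆ N : ℕ, KN N x) = K₂ x := by
        intro x
        rw [← lintegral_iSup (f := fun N y => ENNReal.ofReal (green x y * (AN N).indicator q₂ y)) (fun N => ((green_meas_right x).mul (hq₂mA N)).ennreal_ofReal)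
          (fun N M h y => by
            apply ENNReal.ofReal_le_ofReal
            apply mul_le_mul_of_nonneg_left ?_ (green_nonneg x y)
            exact indicator_le_indicator_of_subset (hANmono N M h) (fun y => hq₂nn y) y)]
        apply lintegral_congr; intro y
        obtain ⟨N1, hN1⟩ := exists_nat_gt (q₂ y)
        obtain ⟨N2, hN2⟩ := exists_nat_gt ‖y‖
        have hyN : y ∈ AN (max N1 N2) := by
          constructor
          · have : (N1:ℝ) ≤ ((max N1 N2 : ℕ):ℝ) := by exact_mod_cast Nat.le_max_left N1 N2
            exact le_trans hN1.le this
          · rw [mem_ball_zero_iff]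
            have : (N2:ℝ) ≤ ((max N1 N2 : ℕ):ℝ) := by exact_mod_cast Nat.le_max_right N1 N2
            linarith
        apply le_antisymm
        · apply iSup_le; intro N
          apply ENNReal.ofReal_le_ofReal
          apply mul_le_mul_of_nonneg_left ?_ (green_nonneg x y)
          exact indicator_le_self' (fun y _ => hq₂nn y) y
        · calc ENNReal.ofReal (green x y * q₂ y)
              = ENNReal.ofReal (green x y * (AN (max N1 N2)).indicator q₂ y) := by
                rw [indicator_of_mem hyN]
            _ ≤ ⨆ N : ℕ, ENNReal.ofReal (green x y * (AN N).indicator q₂ y) :=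
                le_iSup (fun N : ℕ => ENNReal.ofReal (green x y * (AN N).indicator q₂ y))
                  (max N1 N2)
      rw [← lintegral_iSup (f := fun N x => ENNReal.ofReal (S'.indicator q₁ x) * KN N x)
        (fun N => ((hq₁m.indicator hS'meas).ennreal_ofReal).mul (hKNmeas N))
        (fun N M h x => mul_le_mul_right (hmono x h) _)]
      apply lintegral_congr; intro x
      rw [← ENNReal.mul_iSup, hKsup x]
    have hinf : (∫⁻ x, ENNReal.ofReal (S'.indicator q₁ x) * K₂ x) = ∞ := by
      have hpoint : ∀ x : E3, S'.indicator (fun _ => (∞:ℝ≥0∞)) x ≤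
          ENNReal.ofReal (S'.indicator q₁ x) * K₂ x := by
        intro x
        by_cases hx : x ∈ S'
        · rw [indicator_of_mem hx, indicator_of_mem hx]
          obtain ⟨⟨hxS, hxde⟩, _⟩ := hx
          rw [hxS.2, ENNReal.mul_top]
          simp only [ne_eq, ENNReal.ofReal_eq_zero, not_le]
          have : de ≤ q₁ x := hxde
          linarith
        · rw [indicator_of_notMem hx]; exact zero_le
      have hone : (∫⁻ x, S'.indicator (fun _ => (∞:ℝ≥0∞)) x) = ∞ := by
        rw [lintegral_indicator hS'meas]
        rw [setLIntegral_const]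
        exact ENNReal.top_mul hS'
      exact top_le_iff.mp (hone ▸ lintegral_mono hpoint)
    have hcontra : (∞:ℝ≥0∞) ≤ ENNReal.ofReal C := by
      rw [← hinf, ← hsup]
      exact iSup_le hGle
    exact (ENNReal.ofReal_lt_top).not_ge hcontra
  · -- finite : Fubini
    have hFm : Measurable (fun p : E3 × E3 => q₁ p.1 * (green p.1 p.2 * q₂ p.2)) := by
      exact (hq₁m.comp measurable_fst).mul (green_meas.mul (hq₂m.comp measurable_snd))
    have hprod : (∫⁻ p : E3 × E3, ‖q₁ p.1 * (green p.1 p.2 * q₂ p.2)‖ₑ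
        ∂((volume : Measure E3).prod volume)) = ∫⁻ x, ENNReal.ofReal (q₁ x) * K₂ x := by
      rw [lintegral_prod _ ((hFm.enorm).aemeasurable)]
      apply lintegral_congr; intro x
      rw [← lintegral_const_mul _ (f := fun y => ENNReal.ofReal (green x y * q₂ y)) (((green_meas_right x).mul hq₂m).ennreal_ofReal)]
      apply lintegral_congr; intro y
      rw [show (‖q₁ x * (green x y * q₂ y)‖ₑ : ℝ≥0∞)
          = ENNReal.ofReal (q₁ x * (green x y * q₂ y)) from
        Real.enorm_eq_ofReal (mul_nonneg (hq₁nn x)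
          (mul_nonneg (green_nonneg x y) (hq₂nn y)))]
      rw [ENNReal.ofReal_mul (hq₁nn x)]
    have hFint : Integrable (Function.uncurry fun (x y : E3) => q₁ x * (green x y * q₂ y))
        ((volume : Measure E3).prod volume) := by
      have huc : (Function.uncurry fun (x y : E3) => q₁ x * (green x y * q₂ y))
          = fun p : E3 × E3 => q₁ p.1 * (green p.1 p.2 * q₂ p.2) := by
        funext p; simp [Function.uncurry]
      rw [huc]
      refine ⟨hFm.aestronglyMeasurable, ?_⟩
      show (∫⁻ p : E3 × E3, ‖q₁ p.1 * (green p.1 p.2 * q₂ p.2)‖ₑ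
        ∂((volume : Measure E3).prod volume)) < ∞
      rw [hprod]
      exact Ne.lt_top hL
    calc (∫ x, q₁ x * (∫ y, green x y * q₂ y))
        = ∫ x, ∫ y, q₁ x * (green x y * q₂ y) := by
          apply integral_congr_ae (ae_of_all _ fun x => ?_)
          rw [integral_rmul]
      _ = ∫ y, ∫ x, q₁ x * (green x y * q₂ y) := integral_integral_swap hFint
      _ = ∫ y, q₂ y * (∫ x, green y x * q₁ x) := by
          apply integral_congr_ae (ae_of_all _ fun y => ?_)
          rw [← integral_rmul]
          apply integral_congr_ae (ae_of_all _ fun x => ?_)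
          rw [green_symm y x]; ring


set_option maxHeartbeats 1000000 in
lemma symm_X (W : E3 → ℝ) (hW : ∀ x, 0 ≤ W x) (X : L2 →L[ℂ] L2)
    (hX : ∀ φ : L2, ∀ᵐ x : E3, X φ x =
      ∫ y : E3, ((W x * green x y * W y : ℝ) : ℂ) * φ y)
    (ζ₁ ζ₂ : L2) :
    (inner ℂ ζ₁ (X ζ₂) : ℂ) = (starRingEnd ℂ) (inner ℂ ζ₂ (X ζ₁) : ℂ) := by
  have hsubL : ∀ a a' b : L2,
      (inner ℂ a (X b) : ℂ) = (starRingEnd ℂ) (inner ℂ b (X a) : ℂ) →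
      (inner ℂ a' (X b) : ℂ) = (starRingEnd ℂ) (inner ℂ b (X a') : ℂ) →
      (inner ℂ (a - a') (X b) : ℂ) = (starRingEnd ℂ) (inner ℂ b (X (a - a')) : ℂ) := by
    intro a a' b h1 h2
    rw [inner_sub_left, map_sub, inner_sub_right, map_sub, h1, h2]
  have haddL : ∀ a a' b : L2,
      (inner ℂ a (X b) : ℂ) = (starRingEnd ℂ) (inner ℂ b (X a) : ℂ) →
      (inner ℂ a' (X b) : ℂ) = (starRingEnd ℂ) (inner ℂ b (X a') : ℂ) →
      (inner ℂ (a + a') (X b) : ℂ) = (starRingEnd ℂ) (inner ℂ b (X (a + a')) : ℂ) := by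
    intro a a' b h1 h2
    rw [inner_add_left, map_add, inner_add_right, map_add, h1, h2]
  have hsmulL : ∀ (c : ℂ) (a b : L2),
      (inner ℂ a (X b) : ℂ) = (starRingEnd ℂ) (inner ℂ b (X a) : ℂ) →
      (inner ℂ (c • a) (X b) : ℂ) = (starRingEnd ℂ) (inner ℂ b (X (c • a)) : ℂ) := by
    intro c a b h
    rw [inner_smul_left, X.map_smul, inner_smul_right, map_mul, h]
  have hsubR : ∀ a b b' : L2,
      (inner ℂ a (X b) : ℂ) = (starRingEnd ℂ) (inner ℂ b (X a) : ℂ) →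
      (inner ℂ a (X b') : ℂ) = (starRingEnd ℂ) (inner ℂ b' (X a) : ℂ) →
      (inner ℂ a (X (b - b')) : ℂ) = (starRingEnd ℂ) (inner ℂ (b - b') (X a) : ℂ) := by
    intro a b b' h1 h2
    rw [map_sub, inner_sub_right, inner_sub_left, map_sub, h1, h2]
  have haddR : ∀ a b b' : L2,
      (inner ℂ a (X b) : ℂ) = (starRingEnd ℂ) (inner ℂ b (X a) : ℂ) →
      (inner ℂ a (X b') : ℂ) = (starRingEnd ℂ) (inner ℂ b' (X a) : ℂ) →
      (inner ℂ a (X (b + b')) : ℂ) = (starRingEnd ℂ) (inner ℂ (b + b') (X a) : ℂ) := by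
    intro a b b' h1 h2
    rw [map_add, inner_add_right, inner_add_left, map_add, h1, h2]
  have hsmulR : ∀ (c : ℂ) (a b : L2),
      (inner ℂ a (X b) : ℂ) = (starRingEnd ℂ) (inner ℂ b (X a) : ℂ) →
      (inner ℂ a (X (c • b)) : ℂ) = (starRingEnd ℂ) (inner ℂ (c • b) (X a) : ℂ) := by
    intro c a b h
    rw [X.map_smul, inner_smul_right, h, inner_smul_left, map_mul, Complex.conj_conj]
  obtain ⟨a1, a2, a3, a4, hna1, hna2, hna3, hna4, hda⟩ := exists_decomp ζ₁
  obtain ⟨b1, b2, b3, b4, hnb1, hnb2, hnb3, hnb4, hdb⟩ := exists_decomp ζ₂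
  have base := fun (a b : L2) (ha : nn a) (hb : nn b) => symm_nonneg W hW X hX a b ha hb
  have stepL : ∀ b : L2, nn b →
      (inner ℂ ζ₁ (X b) : ℂ) = (starRingEnd ℂ) (inner ℂ b (X ζ₁) : ℂ) := by
    intro b hb
    rw [hda]
    exact hsubL _ _ _ (haddL _ _ _ (hsubL _ _ _ (base a1 b hna1 hb) (base a2 b hna2 hb))
      (hsmulL Complex.I _ _ (base a3 b hna3 hb))) (hsmulL Complex.I _ _ (base a4 b hna4 hb))
  rw [hdb]
  exact hsubR _ _ _ (haddR _ _ _ (hsubR _ _ _ (stepL b1 hnb1) (stepL b2 hnb2))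
    (hsmulR Complex.I _ _ (stepL b3 hnb3))) (hsmulR Complex.I _ _ (stepL b4 hnb4))

end BS


open BS in
set_option maxHeartbeats 1000000 in
/-- Birman–Schwinger type estimate: with `V = V₊ - V₋` (disjoint supports, `V± ≥ 0`),
`J = sgn V`, `X = |V|^{1/2} (-Δ)⁻¹ |V|^{1/2}` and `X± = V±^{1/2} (-Δ)⁻¹ V±^{1/2}`,
for every `φ ∈ L²(ℝ³)` one has `√2 ‖φ‖ ‖(J+X)φ‖ ≥ ⟨φ, (X₊ + 1 - X₋) φ⟩`. -/
theorem stmt1 (Vp Vm : E3 → ℝ)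
    (hVp : ∀ x, 0 ≤ Vp x) (hVm : ∀ x, 0 ≤ Vm x)
    (hdisj : ∀ x, Vp x = 0 ∨ Vm x = 0)
    (J X Xp Xm : L2 →L[ℂ] L2)
    (hJ : ∀ φ : L2, ∀ᵐ x : E3, J φ x =
      (if 0 ≤ Vp x - Vm x then (1 : ℂ) else -1) * φ x)
    (hX : ∀ φ : L2, ∀ᵐ x : E3, X φ x =
      ∫ y : E3, ((Real.sqrt |Vp x - Vm x| * green x y * Real.sqrt |Vp y - Vm y| : ℝ) : ℂ) * φ y)
    (hXp : ∀ φ : L2, ∀ᵐ x : E3, Xp φ x =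
      ∫ y : E3, ((Real.sqrt (Vp x) * green x y * Real.sqrt (Vp y) : ℝ) : ℂ) * φ y)
    (hXm : ∀ φ : L2, ∀ᵐ x : E3, Xm φ x =
      ∫ y : E3, ((Real.sqrt (Vm x) * green x y * Real.sqrt (Vm y) : ℝ) : ℂ) * φ y)
    (φ : L2) :
    (inner ℂ φ ((Xp + 1 - Xm) φ) : ℂ).re ≤ Real.sqrt 2 * ‖φ‖ * ‖(J + X) φ‖ := by
  classical
  -- pointwise weight identities
  have hepW : ∀ x : E3, (if 0 ≤ Vp x - Vm x then (1:ℝ) else 0) * Real.sqrt |Vp x - Vm x|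
      = Real.sqrt (Vp x) := by
    intro x
    by_cases h : 0 ≤ Vp x - Vm x
    · rw [if_pos h, one_mul]
      rcases hdisj x with h1 | h1
      · have h2 : Vm x = 0 := by
          have := hVm x; rw [h1] at h; linarith
        rw [h1, h2]; simp
      · rw [h1]; rw [sub_zero, abs_of_nonneg (hVp x)]
    · rw [if_neg h, zero_mul]
      rcases hdisj x with h1 | h1
      · rw [h1]; simp
      · exfalso; apply h; rw [h1]; simpa using hVp x
  have hemW : ∀ x : E3, (1 - (if 0 ≤ Vp x - Vm x then (1:ℝ) else 0)) * Real.sqrt |Vp x - Vm x|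
      = Real.sqrt (Vm x) := by
    intro x
    by_cases h : 0 ≤ Vp x - Vm x
    · rw [if_pos h]
      have h2 : Vm x = 0 := by
        rcases hdisj x with h1 | h1
        · have := hVm x; rw [h1] at h; linarith
        · exact h1
      rw [h2]; simp
    · rw [if_neg h]
      have h1 : Vp x = 0 := by
        rcases hdisj x with h1 | h1
        · exact h1
        · exfalso; apply h; rw [h1]; simpa using hVp x
      rw [h1]; rw [zero_sub, abs_neg, abs_of_nonneg (hVm x)]
      norm_num
  -- split φ into the positive and negative parts
  set f : L2 := (2⁻¹ : ℂ) • (φ + J φ) with hfdef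
  set g : L2 := (2⁻¹ : ℂ) • (φ - J φ) with hgdef
  have hfg : f + g = φ := by rw [hfdef, hgdef]; module
  have hfg' : f - g = J φ := by rw [hfdef, hgdef]; module
  have hfval : ∀ᵐ x : E3 ∂(volume : Measure E3),
      f x = (((if 0 ≤ Vp x - Vm x then (1:ℝ) else 0) : ℝ) : ℂ) * φ x := by
    filter_upwards [Lp.coeFn_smul (2⁻¹ : ℂ) (φ + J φ), Lp.coeFn_add φ (J φ), hJ φ]
      with x h1 h2 h3
    rw [hfdef, h1]
    simp only [Pi.smul_apply, smul_eq_mul]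
    rw [h2]
    simp only [Pi.add_apply]
    rw [h3]
    by_cases h : 0 ≤ Vp x - Vm x
    · rw [if_pos h, if_pos h]; push_cast; ring
    · rw [if_neg h, if_neg h]; push_cast; ring
  have hgval : ∀ᵐ x : E3 ∂(volume : Measure E3),
      g x = ((1 - (if 0 ≤ Vp x - Vm x then (1:ℝ) else 0) : ℝ) : ℂ) * φ x := by
    filter_upwards [Lp.coeFn_smul (2⁻¹ : ℂ) (φ - J φ), Lp.coeFn_sub φ (J φ), hJ φ]
      with x h1 h2 h3
    rw [hgdef, h1]
    simp only [Pi.smul_apply, smul_eq_mul]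
    rw [h2]
    simp only [Pi.sub_apply]
    rw [h3]
    by_cases h : 0 ≤ Vp x - Vm x
    · rw [if_pos h, if_pos h]; push_cast; ring
    · rw [if_neg h, if_neg h]; push_cast; ring
  -- weighted identities
  have hwpW : ∀ᵐ y : E3 ∂(volume : Measure E3),
      ((Real.sqrt |Vp y - Vm y| : ℝ) : ℂ) * f y = ((Real.sqrt (Vp y) : ℝ) : ℂ) * φ y := by
    filter_upwards [hfval] with y hy
    rw [hy, show ((Real.sqrt (Vp y) : ℝ) : ℂ)
      = (((if 0 ≤ Vp y - Vm y then (1:ℝ) else 0) : ℝ) : ℂ) * ((Real.sqrt |Vp y - Vm y| : ℝ) : ℂ)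
      from by rw [← Complex.ofReal_mul, hepW y]]
    ring
  have hwmW : ∀ᵐ y : E3 ∂(volume : Measure E3),
      ((Real.sqrt |Vp y - Vm y| : ℝ) : ℂ) * g y = ((Real.sqrt (Vm y) : ℝ) : ℂ) * φ y := by
    filter_upwards [hgval] with y hy
    rw [hy, show ((Real.sqrt (Vm y) : ℝ) : ℂ)
      = ((1 - (if 0 ≤ Vp y - Vm y then (1:ℝ) else 0) : ℝ) : ℂ) * ((Real.sqrt |Vp y - Vm y| : ℝ) : ℂ)
      from by rw [← Complex.ofReal_mul, hemW y]]
    ring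
  -- a.e. values of the four operator applications
  have hXf := BS.X_val (fun x => Real.sqrt |Vp x - Vm x|) X hX f
    (fun y => ((Real.sqrt (Vp y) : ℝ) : ℂ) * φ y) hwpW
  have hXg := BS.X_val (fun x => Real.sqrt |Vp x - Vm x|) X hX g
    (fun y => ((Real.sqrt (Vm y) : ℝ) : ℂ) * φ y) hwmW
  have hXpφ := BS.X_val (fun x => Real.sqrt (Vp x)) Xp hXp φ
    (fun y => ((Real.sqrt (Vp y) : ℝ) : ℂ) * φ y) (Filter.Eventually.of_forall fun y => rfl)
  have hXmφ := BS.X_val (fun x => Real.sqrt (Vm x)) Xm hXm φ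
    (fun y => ((Real.sqrt (Vm y) : ℝ) : ℂ) * φ y) (Filter.Eventually.of_forall fun y => rfl)
  -- inner product identities
  have h1 : (inner ℂ φ (Xp φ) : ℂ) = (inner ℂ f (X f) : ℂ) := by
    rw [MeasureTheory.L2.inner_def, MeasureTheory.L2.inner_def]
    apply integral_congr_ae
    filter_upwards [hXpφ, hXf, hfval] with x hx1 hx2 hx3
    simp only [RCLike.inner_apply]
    rw [hx1, hx2, hx3, map_mul, Complex.conj_ofReal]
    rw [show ((Real.sqrt (Vp x) : ℝ) : ℂ)
      = (((if 0 ≤ Vp x - Vm x then (1:ℝ) else 0) : ℝ) : ℂ) * ((Real.sqrt |Vp x - Vm x| : ℝ) : ℂ)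
      from by rw [← Complex.ofReal_mul, hepW x]]
    ring
  have h2 : (inner ℂ φ (Xm φ) : ℂ) = (inner ℂ g (X g) : ℂ) := by
    rw [MeasureTheory.L2.inner_def, MeasureTheory.L2.inner_def]
    apply integral_congr_ae
    filter_upwards [hXmφ, hXg, hgval] with x hx1 hx2 hx3
    simp only [RCLike.inner_apply]
    rw [hx1, hx2, hx3, map_mul, Complex.conj_ofReal]
    rw [show ((Real.sqrt (Vm x) : ℝ) : ℂ)
      = ((1 - (if 0 ≤ Vp x - Vm x then (1:ℝ) else 0) : ℝ) : ℂ) * ((Real.sqrt |Vp x - Vm x| : ℝ) : ℂ)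
      from by rw [← Complex.ofReal_mul, hemW x]]
    ring
  have hnormJ : ‖J φ‖ = ‖φ‖ := by
    rw [MeasureTheory.Lp.norm_def, MeasureTheory.Lp.norm_def]
    congr 1
    apply eLpNorm_congr_norm_ae
    filter_upwards [hJ φ] with x hx
    rw [hx]
    by_cases h : 0 ≤ Vp x - Vm x
    · rw [if_pos h]; simp
    · rw [if_neg h]; simp
  have hcross := BS.symm_X (fun x => Real.sqrt |Vp x - Vm x|)
    (fun x => Real.sqrt_nonneg _) X hX f g
  have hXφ : X φ = X f + X g := by rw [← hfg, map_add]
  have hLHS : (inner ℂ φ ((Xp + 1 - Xm) φ) : ℂ).re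
      = ‖φ‖ ^ 2 + ((inner ℂ f (X f) : ℂ).re - (inner ℂ g (X g) : ℂ).re) := by
    have happ : (Xp + 1 - Xm) φ = Xp φ + φ - Xm φ := by
      simp [ContinuousLinearMap.sub_apply, ContinuousLinearMap.add_apply,
        ContinuousLinearMap.one_apply]
    rw [happ, inner_sub_right, inner_add_right, h1, h2]
    have hphi : (inner ℂ φ φ : ℂ).re = ‖φ‖ ^ 2 := by
      have := inner_self_eq_norm_sq (𝕜 := ℂ) φ; simpa using this
    simp only [Complex.sub_re, Complex.add_re]
    rw [hphi]; ring
  have hRHS : (inner ℂ (J φ) ((J + X) φ) : ℂ).re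
      = ‖φ‖ ^ 2 + ((inner ℂ f (X f) : ℂ).re - (inner ℂ g (X g) : ℂ).re) := by
    have happ : (J + X) φ = J φ + X φ := by
      simp [ContinuousLinearMap.add_apply]
    rw [happ, inner_add_right]
    have hJφ2 : (inner ℂ (J φ) (J φ) : ℂ).re = ‖φ‖ ^ 2 := by
      have := inner_self_eq_norm_sq (𝕜 := ℂ) (J φ)
      rw [hnormJ] at this; simpa using this
    have hexp : (inner ℂ (J φ) (X φ) : ℂ)
        = inner ℂ f (X f) + inner ℂ f (X g) - inner ℂ g (X f) - inner ℂ g (X g) := by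
      rw [← hfg', hXφ, inner_sub_left, inner_add_right, inner_add_right]; ring
    rw [Complex.add_re, hJφ2, hexp]
    have hre : (inner ℂ f (X g) : ℂ).re = (inner ℂ g (X f) : ℂ).re := by
      rw [hcross]; exact Complex.conj_re _
    simp only [Complex.sub_re, Complex.add_re]
    rw [hre]; ring
  calc (inner ℂ φ ((Xp + 1 - Xm) φ) : ℂ).re
      = (inner ℂ (J φ) ((J + X) φ) : ℂ).re := by rw [hLHS, hRHS]
    _ ≤ ‖(inner ℂ (J φ) ((J + X) φ) : ℂ)‖ := Complex.re_le_norm _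
    _ ≤ ‖J φ‖ * ‖(J + X) φ‖ := norm_inner_le_norm _ _
    _ = ‖φ‖ * ‖(J + X) φ‖ := by rw [hnormJ]
    _ ≤ Real.sqrt 2 * ‖φ‖ * ‖(J + X) φ‖ := by
        have hs : (1:ℝ) ≤ Real.sqrt 2 := by
          rw [show (1:ℝ) = Real.sqrt 1 from Real.sqrt_one.symm]
          exact Real.sqrt_le_sqrt (by norm_num)
        have hnn : (0:ℝ) ≤ ‖φ‖ * ‖(J + X) φ‖ := by positivity
        nlinarith
end
end

section
/- In the setting of the Birman–Schwinger estimate, if φ = φ₊ + φ₋ with supp(φ₋) ⊆ supp(V₋) and supp(φ₊) ∩ supp(V₋) = ∅, then ‖(J+X)φ‖ · (‖φ₊‖ + ‖φ₋‖) ≥ ⟨φ₊, (1+X₊)φ₊⟩ + ⟨φ₋, (1−X₋)φ₋⟩. -/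
open MeasureTheory
noncomputable section

set_option maxHeartbeats 1000000
open ComplexConjugate


lemma green_nonneg (x y : E3) : 0 ≤ green x y := by
  unfold green
  have := Real.pi_pos
  positivity

lemma green_symm (x y : E3) : green x y = green y x := by
  unfold green; rw [norm_sub_rev]

lemma green_meas_right (x : E3) : Measurable (fun y : E3 => green x y) := by
  unfold green
  exact measurable_const.div ((measurable_const.sub measurable_id).norm.const_mul _)

lemma green_meas : Measurable (fun p : E3 × E3 => green p.1 p.2) := by
  unfold green
  exact measurable_const.div (((measurable_fst.sub measurable_snd).norm).const_mul _)

lemma green_ne_zero {x y : E3} (h : y ≠ x) : green x y ≠ 0 := by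
  unfold green
  have hπ := Real.pi_pos
  have : ‖x - y‖ ≠ 0 := by
    simp only [norm_ne_zero_iff, sub_ne_zero]
    exact fun hxy => h hxy.symm
  have h0 : 0 < ‖x - y‖ := lt_of_le_of_ne (norm_nonneg _) (Ne.symm this)
  positivity

lemma lintegral_green_ball_lt_top (x : E3) {R : ℝ} (hR : 0 < R) :
    ∫⁻ y in Metric.ball x R, ENNReal.ofReal (green x y) ∂volume < ⊤ := by
  have hπ : (0:ℝ) < Real.pi := Real.pi_pos
  set A : ℕ → Set E3 := fun k => Metric.ball x (R / 2 ^ k) \ Metric.ball x (R / 2 ^ (k + 1)) with hA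
  have hcover : Metric.ball x R ⊆ {x} ∪ ⋃ k, A k := by
    intro y hy
    rcases eq_or_ne y x with rfl | hyx
    · exact Or.inl rfl
    · have hd0 : 0 < dist y x := dist_pos.2 hyx
      have hdR : dist y x < R := Metric.mem_ball.1 hy
      have hex : ∃ k : ℕ, R / 2 ^ (k + 1) ≤ dist y x := by
        obtain ⟨k, hk⟩ := pow_unbounded_of_one_lt (R / dist y x) (one_lt_two (α := ℝ))
        refine ⟨k, ?_⟩
        rw [div_lt_iff₀ hd0] at hk
        rw [div_le_iff₀ (pow_pos two_pos _)]
        have h2 : (2:ℝ) ^ k ≤ 2 ^ (k+1) := by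
          apply pow_le_pow_right₀ one_le_two (Nat.le_succ k)
        nlinarith [pow_pos (two_pos (α := ℝ)) k]
      right
      refine Set.mem_iUnion.2 ⟨Nat.find hex, ?_⟩
      have hk1 : R / 2 ^ (Nat.find hex + 1) ≤ dist y x := Nat.find_spec hex
      have hk2 : dist y x < R / 2 ^ (Nat.find hex) := by
        rcases Nat.eq_zero_or_pos (Nat.find hex) with h0 | h0
        · simpa [h0] using hdR
        · obtain ⟨j, hj⟩ := Nat.exists_eq_succ_of_ne_zero h0.ne'
          have := Nat.find_min hex (m := j) (by omega)
          rw [hj]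
          exact lt_of_not_ge this
      exact ⟨Metric.mem_ball.2 hk2, fun h => absurd (Metric.mem_ball.1 h) (not_lt.2 hk1)⟩
  have hAk : ∀ k, ∫⁻ y in A k, ENNReal.ofReal (green x y) ∂volume ≤
      ENNReal.ofReal (2 ^ (k+1) / (4 * Real.pi * R)) * volume (Metric.ball x (R / 2 ^ k)) := by
    intro k
    have hmeasA : MeasurableSet (A k) := measurableSet_ball.diff measurableSet_ball
    have hb : ∀ y ∈ A k, ENNReal.ofReal (green x y) ≤
        ENNReal.ofReal (2 ^ (k+1) / (4 * Real.pi * R)) := by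
      intro y hy
      apply ENNReal.ofReal_le_ofReal
      have h1 : R / 2 ^ (k+1) ≤ dist y x := le_of_not_gt fun h => hy.2 (Metric.mem_ball.2 h)
      have h2 : 0 < dist y x := lt_of_lt_of_le (by positivity) h1
      rw [dist_eq_norm] at h1 h2
      unfold green
      rw [← norm_sub_rev y x]
      rw [div_le_div_iff₀ (by positivity) (by positivity)]
      rw [div_le_iff₀ (pow_pos two_pos _)] at h1
      nlinarith
    calc ∫⁻ y in A k, ENNReal.ofReal (green x y) ∂volume
        ≤ ∫⁻ _ in A k, ENNReal.ofReal (2 ^ (k+1) / (4 * Real.pi * R)) ∂volume :=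
          setLIntegral_mono measurable_const hb
      _ = ENNReal.ofReal (2 ^ (k+1) / (4 * Real.pi * R)) * volume (A k) :=
          setLIntegral_const _ _
      _ ≤ _ := mul_le_mul_right (measure_mono Set.diff_subset) _
  calc ∫⁻ y in Metric.ball x R, ENNReal.ofReal (green x y) ∂volume
      ≤ ∫⁻ y in {x} ∪ ⋃ k, A k, ENNReal.ofReal (green x y) ∂volume := lintegral_mono_set hcover
    _ ≤ (∫⁻ y in ({x} : Set E3), ENNReal.ofReal (green x y) ∂volume)
        + ∫⁻ y in ⋃ k, A k, ENNReal.ofReal (green x y) ∂volume := lintegral_union_le _ _ _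
    _ = ∫⁻ y in ⋃ k, A k, ENNReal.ofReal (green x y) ∂volume := by
        rw [setLIntegral_measure_zero _ _ (measure_singleton x), zero_add]
    _ ≤ ∑' k, ∫⁻ y in A k, ENNReal.ofReal (green x y) ∂volume := lintegral_iUnion_le _ _
    _ ≤ ∑' k : ℕ, ENNReal.ofReal (2 ^ (k+1) / (4 * Real.pi * R)) *
          volume (Metric.ball x (R / 2 ^ k)) := ENNReal.tsum_le_tsum hAk
    _ < ⊤ := by
        have hV1 : volume (Metric.ball (0:E3) 1) < ⊤ := measure_ball_lt_top
        have hvol : ∀ k : ℕ, volume (Metric.ball x (R / 2 ^ k)) =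
            ENNReal.ofReal ((R / 2 ^ k) ^ 3) * volume (Metric.ball (0:E3) 1) := by
          intro k
          rw [Measure.addHaar_ball volume x (by positivity)]
          congr 2
          rw [finrank_euclideanSpace_fin]
        have hterm : ∀ k : ℕ, ENNReal.ofReal (2 ^ (k+1) / (4 * Real.pi * R)) *
            volume (Metric.ball x (R / 2 ^ k)) =
            ENNReal.ofReal (R ^ 2 / (2 * Real.pi)) * ENNReal.ofReal ((1/4 : ℝ)) ^ k *
              volume (Metric.ball (0:E3) 1) := by
          intro k
          rw [hvol k, ← mul_assoc]
          congr 1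
          rw [← ENNReal.ofReal_pow (by norm_num), ← ENNReal.ofReal_mul (by positivity),
            ← ENNReal.ofReal_mul (by positivity)]
          congr 1
          have h2k : (0:ℝ) < 2 ^ k := pow_pos two_pos k
          have h14 : ((1:ℝ)/4) ^ k = (((2:ℝ) ^ k) * 2 ^ k)⁻¹ := by
            rw [div_pow, one_pow, ← mul_pow, one_div]
            norm_num
          rw [h14, pow_succ, div_pow]
          field_simp
          ring
        rw [tsum_congr hterm]
        rw [ENNReal.tsum_mul_right, ENNReal.tsum_mul_left, ENNReal.tsum_geometric]
        refine ENNReal.mul_lt_top (ENNReal.mul_lt_top ENNReal.ofReal_lt_top ?_) hV1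
        rw [ENNReal.inv_lt_top, tsub_pos_iff_lt]
        exact ENNReal.ofReal_lt_one.2 (by norm_num)

lemma integrableOn_green (x : E3) (R : ℝ) :
    IntegrableOn (fun y : E3 => green x y) (Metric.closedBall 0 R) volume := by
  have hsub : Metric.closedBall (0:E3) R ⊆ Metric.ball x (‖x‖ + |R| + 1) := by
    intro y hy
    have : ‖y‖ ≤ R := by simpa using mem_closedBall_zero_iff.1 hy
    have : dist y x ≤ ‖y‖ + ‖x‖ := by
      rw [dist_eq_norm]
      exact (norm_sub_le _ _)
    rw [Metric.mem_ball]
    have hR : R ≤ |R| := le_abs_self R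
    linarith
  refine IntegrableOn.mono_set ?_ hsub
  constructor
  · exact (green_meas_right x).aestronglyMeasurable.restrict
  · rw [hasFiniteIntegral_iff_norm]
    have : ∀ y : E3, ENNReal.ofReal ‖green x y‖ = ENNReal.ofReal (green x y) := by
      intro y
      rw [Real.norm_eq_abs, abs_of_nonneg (green_nonneg x y)]
    simp only [this]
    exact lintegral_green_ball_lt_top x (by positivity)

lemma kernel_pull (a : ℝ) (W : E3 → ℝ) (x : E3) (ψ : E3 → ℂ) :
    (∫ y : E3, ((a * green x y * W y : ℝ) : ℂ) * ψ y) =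
      (a:ℂ) * ∫ y : E3, ((green x y :ℝ):ℂ) * (((W y:ℝ):ℂ) * ψ y) := by
  rw [← integral_const_mul]
  apply integral_congr_ae
  refine Filter.Eventually.of_forall fun y => ?_
  push_cast
  ring

lemma Xzero (W : E3 → ℝ) (X : L2 →L[ℂ] L2) (ψ : L2)
    (hXψ : ∀ᵐ x : E3, X ψ x =
      ∫ y : E3, ((W x * green x y * W y : ℝ) : ℂ) * ψ y)
    (hns : ¬ AEStronglyMeasurable (fun y : E3 => ((W y : ℝ) : ℂ) * ψ y) volume) :
    ∀ᵐ x : E3, X ψ x = 0 := by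
  filter_upwards [hXψ] with x hx
  rw [hx]
  by_cases hWx : W x = 0
  · have hzero : (fun y : E3 => ((W x * green x y * W y : ℝ) : ℂ) * ψ y) = fun _ => 0 := by
      funext y; simp [hWx]
    rw [hzero, integral_zero]
  · apply integral_undef
    intro hint
    apply hns
    have hmeas : AEStronglyMeasurable
        (fun y : E3 => ((W x * green x y * W y : ℝ) : ℂ) * ψ y) volume := hint.1
    have hgm : Measurable fun y : E3 => (((W x * green x y :ℝ) : ℂ))⁻¹ :=
      (Complex.measurable_ofReal.comp ((green_meas_right x).const_mul _)).inv
    have hne : ∀ᵐ y : E3, y ≠ x := by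
      rw [ae_iff]
      simpa using measure_singleton x
    refine (hgm.aestronglyMeasurable.mul hmeas).congr ?_
    filter_upwards [hne] with y hy
    have hg : green x y ≠ 0 := green_ne_zero hy
    have hWxc : ((W x : ℝ) : ℂ) ≠ 0 := by
      simpa using hWx
    have hgc : ((green x y : ℝ) : ℂ) ≠ 0 := by
      simpa using hg
    simp only [Pi.mul_apply]
    push_cast
    field_simp

lemma inner_green_symm (W : E3 → ℝ) (hW : ∀ x, 0 ≤ W x) (X : L2 →L[ℂ] L2)
    (hX : ∀ φ : L2, ∀ᵐ x : E3, X φ x =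
      ∫ y : E3, ((W x * green x y * W y : ℝ) : ℂ) * φ y)
    (f g : L2)
    (hu : AEStronglyMeasurable (fun x : E3 => ((W x : ℝ) : ℂ) * f x) volume)
    (hv : AEStronglyMeasurable (fun x : E3 => ((W x : ℝ) : ℂ) * g x) volume) :
    (inner ℂ f (X g) : ℂ).re = (inner ℂ g (X f) : ℂ).re := by
  obtain ⟨uK, huKm, hueq⟩ : ∃ uK : E3 → ℂ, StronglyMeasurable uK ∧
      (fun x : E3 => ((W x : ℝ) : ℂ) * f x) =ᵐ[volume] uK :=
    ⟨hu.mk _, hu.stronglyMeasurable_mk, hu.ae_eq_mk⟩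
  obtain ⟨vK, hvKm, hveq⟩ : ∃ vK : E3 → ℂ, StronglyMeasurable vK ∧
      (fun x : E3 => ((W x : ℝ) : ℂ) * g x) =ᵐ[volume] vK :=
    ⟨hv.mk _, hv.stronglyMeasurable_mk, hv.ae_eq_mk⟩
  have hXg : ∀ᵐ x : E3, X g x =
      ((W x : ℝ) : ℂ) * ∫ y : E3, ((green x y :ℝ):ℂ) * (vK y) := by
    filter_upwards [hX g] with x hx
    rw [hx, kernel_pull]
    congr 1
    apply integral_congr_ae
    filter_upwards [hveq] with y hy
    rw [hy]
  have hXf : ∀ᵐ x : E3, X f x =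
      ((W x : ℝ) : ℂ) * ∫ y : E3, ((green x y :ℝ):ℂ) * (uK y) := by
    filter_upwards [hX f] with x hx
    rw [hx, kernel_pull]
    congr 1
    apply integral_congr_ae
    filter_upwards [hueq] with y hy
    rw [hy]
  have h1 : (inner ℂ f (X g) : ℂ) =
      ∫ x : E3, conj (uK x) * ∫ y : E3, ((green x y :ℝ):ℂ) * (vK y) := by
    rw [MeasureTheory.L2.inner_def]
    apply integral_congr_ae
    filter_upwards [hXg, hueq] with x k1 k2
    rw [RCLike.inner_apply', k1, ← k2, map_mul, Complex.conj_ofReal]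
    ring
  have h2 : (inner ℂ g (X f) : ℂ) =
      ∫ x : E3, conj (vK x) * ∫ y : E3, ((green x y :ℝ):ℂ) * (uK y) := by
    rw [MeasureTheory.L2.inner_def]
    apply integral_congr_ae
    filter_upwards [hXf, hveq] with x k1 k2
    rw [RCLike.inner_apply', k1, ← k2, map_mul, Complex.conj_ofReal]
    ring
  have hFin : Integrable (Function.uncurry fun x y : E3 =>
      conj (uK x) * ((green x y : ℝ) : ℂ) * vK y) (volume.prod volume) := by
    have hSp : ∀ n : ℕ, MeasurableSet {x : E3 | ‖uK x‖ ≤ (n:ℝ) ∧ ‖x‖ ≤ (n:ℝ)} := fun n =>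
      (measurableSet_le huKm.measurable.norm measurable_const).inter
        (measurableSet_le measurable_norm measurable_const)
    have hSq : ∀ n : ℕ, MeasurableSet {y : E3 | ‖vK y‖ ≤ (n:ℝ) ∧ ‖y‖ ≤ (n:ℝ)} := fun n =>
      (measurableSet_le hvKm.measurable.norm measurable_const).inter
        (measurableSet_le measurable_norm measurable_const)
    set ln : ℕ → E3 → ℝ := fun n =>
      Set.indicator {x : E3 | ‖uK x‖ ≤ (n:ℝ) ∧ ‖x‖ ≤ (n:ℝ)} (fun x => ‖uK x‖) with hlndef
    set rn : ℕ → E3 → ℝ := fun n =>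
      Set.indicator {y : E3 | ‖vK y‖ ≤ (n:ℝ) ∧ ‖y‖ ≤ (n:ℝ)} (fun y => ‖vK y‖) with hrndef
    have hln_nonneg : ∀ n x, 0 ≤ ln n x := fun n x =>
      Set.indicator_nonneg (fun _ _ => norm_nonneg _) x
    have hrn_nonneg : ∀ n y, 0 ≤ rn n y := fun n y =>
      Set.indicator_nonneg (fun _ _ => norm_nonneg _) y
    have hln_meas : ∀ n, Measurable (ln n) := fun n =>
      (huKm.measurable.norm).indicator (hSp n)
    have hrn_meas : ∀ n, Measurable (rn n) := fun n =>
      (hvKm.measurable.norm).indicator (hSq n)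
    have hln_le : ∀ n x, ln n x ≤ ‖uK x‖ := by
      intro n x
      simp only [hlndef]
      by_cases h : x ∈ {x : E3 | ‖uK x‖ ≤ (n:ℝ) ∧ ‖x‖ ≤ (n:ℝ)}
      · rw [Set.indicator_of_mem h]
      · rw [Set.indicator_of_notMem h]; exact norm_nonneg _
    have hrn_le : ∀ n y, rn n y ≤ ‖vK y‖ := by
      intro n y
      simp only [hrndef]
      by_cases h : y ∈ {y : E3 | ‖vK y‖ ≤ (n:ℝ) ∧ ‖y‖ ≤ (n:ℝ)}
      · rw [Set.indicator_of_mem h]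
      · rw [Set.indicator_of_notMem h]; exact norm_nonneg _
    have hpn : ∀ n : ℕ, MemLp (fun x : E3 =>
        Set.indicator {x : E3 | ‖uK x‖ ≤ (n:ℝ) ∧ ‖x‖ ≤ (n:ℝ)}
          (fun x => ((‖f x‖ : ℝ) : ℂ)) x) 2 volume := by
      intro n
      refine MemLp.of_le (Lp.memLp f) ?_ ?_
      · exact ((Complex.continuous_ofReal.comp_aestronglyMeasurable
          (Lp.aestronglyMeasurable f).norm)).indicator (hSp n)
      · refine Filter.Eventually.of_forall fun x => ?_
        by_cases h : x ∈ {x : E3 | ‖uK x‖ ≤ (n:ℝ) ∧ ‖x‖ ≤ (n:ℝ)}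
        · rw [Set.indicator_of_mem h]; simp
        · rw [Set.indicator_of_notMem h]; simp
    have hqn : ∀ n : ℕ, MemLp (fun y : E3 =>
        Set.indicator {y : E3 | ‖vK y‖ ≤ (n:ℝ) ∧ ‖y‖ ≤ (n:ℝ)}
          (fun y => ((‖g y‖ : ℝ) : ℂ)) y) 2 volume := by
      intro n
      refine MemLp.of_le (Lp.memLp g) ?_ ?_
      · exact ((Complex.continuous_ofReal.comp_aestronglyMeasurable
          (Lp.aestronglyMeasurable g).norm)).indicator (hSq n)
      · refine Filter.Eventually.of_forall fun y => ?_
        by_cases h : y ∈ {y : E3 | ‖vK y‖ ≤ (n:ℝ) ∧ ‖y‖ ≤ (n:ℝ)}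
        · rw [Set.indicator_of_mem h]; simp
        · rw [Set.indicator_of_notMem h]; simp
    have hPn_norm : ∀ n, ‖((hpn n).toLp _ : L2)‖ ≤ ‖f‖ := by
      intro n
      rw [Lp.norm_def, Lp.norm_def]
      apply ENNReal.toReal_mono (Lp.eLpNorm_ne_top f)
      rw [eLpNorm_congr_ae ((hpn n).coeFn_toLp)]
      apply eLpNorm_mono_ae
      refine Filter.Eventually.of_forall fun x => ?_
      by_cases h : x ∈ {x : E3 | ‖uK x‖ ≤ (n:ℝ) ∧ ‖x‖ ≤ (n:ℝ)}
      · rw [Set.indicator_of_mem h]; simp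
      · rw [Set.indicator_of_notMem h]; simp
    have hQn_norm : ∀ n, ‖((hqn n).toLp _ : L2)‖ ≤ ‖g‖ := by
      intro n
      rw [Lp.norm_def, Lp.norm_def]
      apply ENNReal.toReal_mono (Lp.eLpNorm_ne_top g)
      rw [eLpNorm_congr_ae ((hqn n).coeFn_toLp)]
      apply eLpNorm_mono_ae
      refine Filter.Eventually.of_forall fun y => ?_
      by_cases h : y ∈ {y : E3 | ‖vK y‖ ≤ (n:ℝ) ∧ ‖y‖ ≤ (n:ℝ)}
      · rw [Set.indicator_of_mem h]; simp
      · rw [Set.indicator_of_notMem h]; simp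
    have hcn_int : ∀ (n : ℕ) (x : E3), Integrable (fun y => green x y * rn n y) volume := by
      intro n x
      refine Integrable.mono'
        (IntegrableOn.integrable_indicator
          ((integrableOn_green x n).const_mul (n:ℝ)) measurableSet_closedBall)
        ((green_meas_right x).mul (hrn_meas n)).aestronglyMeasurable ?_
      refine Filter.Eventually.of_forall fun y => ?_
      simp only [hrndef]
      by_cases h : y ∈ {y : E3 | ‖vK y‖ ≤ (n:ℝ) ∧ ‖y‖ ≤ (n:ℝ)}
      · rw [Set.indicator_of_mem h]
        have hy : y ∈ Metric.closedBall (0:E3) (n:ℝ) := by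
          simpa [Metric.mem_closedBall, dist_eq_norm] using h.2
        rw [Set.indicator_of_mem hy]
        rw [Real.norm_eq_abs, abs_of_nonneg (mul_nonneg (green_nonneg x y) (norm_nonneg _))]
        rw [mul_comm (n:ℝ) (green x y)]
        exact mul_le_mul_of_nonneg_left h.1 (green_nonneg x y)
      · rw [Set.indicator_of_notMem h]
        simp only [mul_zero, norm_zero]
        exact Set.indicator_nonneg
          (fun z _ => mul_nonneg (Nat.cast_nonneg n) (green_nonneg x z)) y
    have hcn_nonneg : ∀ (n : ℕ) (x : E3), 0 ≤ ∫ y, green x y * rn n y := fun n x =>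
      integral_nonneg fun y => mul_nonneg (green_nonneg x y) (hrn_nonneg n y)
    have hXQn : ∀ n : ℕ, ∀ᵐ x : E3, X ((hqn n).toLp _) x =
        ((W x : ℝ) : ℂ) * (((∫ y, green x y * rn n y : ℝ)) : ℂ) := by
      intro n
      filter_upwards [hX ((hqn n).toLp _)] with x hx
      rw [hx, kernel_pull]
      congr 1
      have hcast : ((∫ y, green x y * rn n y : ℝ) : ℂ) = ∫ y, ((green x y * rn n y : ℝ) : ℂ) :=
        integral_ofReal.symm
      rw [hcast]
      apply integral_congr_ae
      filter_upwards [(hqn n).coeFn_toLp, hveq] with y h1 h2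
      rw [h1]
      simp only [hrndef]
      by_cases h : y ∈ {y : E3 | ‖vK y‖ ≤ (n:ℝ) ∧ ‖y‖ ≤ (n:ℝ)}
      · rw [Set.indicator_of_mem h, Set.indicator_of_mem h]
        have hv' : ‖vK y‖ = W y * ‖g y‖ := by
          rw [← h2, norm_mul, Complex.norm_real, Real.norm_eq_abs, abs_of_nonneg (hW y)]
        rw [hv']
        push_cast
        ring
      · rw [Set.indicator_of_notMem h, Set.indicator_of_notMem h]
        simp
    have hae : ∀ n : ℕ, (fun x : E3 =>
          RCLike.re (inner ℂ (((hpn n).toLp _ : L2) x) ((X ((hqn n).toLp _) : L2) x) : ℂ)) =ᵐ[volume]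
        (fun x : E3 => ln n x * (∫ y, green x y * rn n y)) := by
      intro n
      filter_upwards [hXQn n, (hpn n).coeFn_toLp, hueq] with x h1 h2 h3
      beta_reduce
      rw [RCLike.inner_apply', h1, h2]
      simp only [hlndef]
      by_cases h : x ∈ {x : E3 | ‖uK x‖ ≤ (n:ℝ) ∧ ‖x‖ ≤ (n:ℝ)}
      · rw [Set.indicator_of_mem h, Set.indicator_of_mem h]
        have hu' : ‖uK x‖ = W x * ‖f x‖ := by
          rw [← h3, norm_mul, Complex.norm_real, Real.norm_eq_abs, abs_of_nonneg (hW x)]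
        rw [hu', Complex.conj_ofReal]
        rw [show ((‖f x‖ : ℝ) : ℂ) * (((W x : ℝ) : ℂ) * (((∫ y, green x y * rn n y : ℝ)) : ℂ))
            = (((‖f x‖ * (W x * (∫ y, green x y * rn n y)) : ℝ)) : ℂ) by push_cast; ring]
        rw [RCLike.re_to_complex, Complex.ofReal_re]
        ring
      · rw [Set.indicator_of_notMem h, Set.indicator_of_notMem h]
        simp
    have hInt_lncn : ∀ n : ℕ, Integrable
        (fun x : E3 => ln n x * (∫ y, green x y * rn n y)) volume := fun n =>
      ((L2.integrable_inner (𝕜 := ℂ) ((hpn n).toLp _) (X ((hqn n).toLp _))).re).congr (hae n)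
    have hIle : ∀ n : ℕ, (∫ x, ln n x * (∫ y, green x y * rn n y)) ≤ ‖f‖ * (‖X‖ * ‖g‖) := by
      intro n
      have e1 : (∫ x, ln n x * (∫ y, green x y * rn n y)) =
          RCLike.re (inner ℂ ((hpn n).toLp _ : L2) (X ((hqn n).toLp _)) : ℂ) := by
        rw [MeasureTheory.L2.inner_def, ← integral_re (L2.integrable_inner _ _)]
        exact (integral_congr_ae (hae n)).symm
      rw [e1]
      refine le_trans (re_inner_le_norm _ _) ?_
      have h2 : ‖X ((hqn n).toLp _ : L2)‖ ≤ ‖X‖ * ‖g‖ := by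
        refine le_trans (X.le_opNorm _) ?_
        exact mul_le_mul_of_nonneg_left (hQn_norm n) (norm_nonneg X)
      exact mul_le_mul (hPn_norm n) h2 (norm_nonneg _) (norm_nonneg _)
    have hGnmeas : ∀ n, Measurable (fun p : E3 × E3 =>
        ENNReal.ofReal (ln n p.1) * ENNReal.ofReal (green p.1 p.2) * ENNReal.ofReal (rn n p.2)) :=
      fun n => ((ENNReal.measurable_ofReal.comp ((hln_meas n).comp measurable_fst)).mul
          (ENNReal.measurable_ofReal.comp green_meas)).mul
          (ENNReal.measurable_ofReal.comp ((hrn_meas n).comp measurable_snd))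
    have hkey : ∀ n : ℕ, (∫⁻ p : E3 × E3, ENNReal.ofReal (ln n p.1) * ENNReal.ofReal (green p.1 p.2)
        * ENNReal.ofReal (rn n p.2) ∂(volume.prod volume)) ≤ ENNReal.ofReal (‖f‖ * (‖X‖ * ‖g‖)) := by
      intro n
      rw [MeasureTheory.lintegral_prod _ (hGnmeas n).aemeasurable]
      have hinner : ∀ x : E3, (∫⁻ y, ENNReal.ofReal (ln n x) * ENNReal.ofReal (green x y)
          * ENNReal.ofReal (rn n y)) = ENNReal.ofReal (ln n x)
            * ENNReal.ofReal (∫ y, green x y * rn n y) := by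
        intro x
        have hh : ∀ y : E3, ENNReal.ofReal (ln n x) * ENNReal.ofReal (green x y)
            * ENNReal.ofReal (rn n y) = ENNReal.ofReal (ln n x)
              * ENNReal.ofReal (green x y * rn n y) := by
          intro y
          rw [ENNReal.ofReal_mul (green_nonneg x y), mul_assoc]
        simp only [hh]
        have hm : Measurable fun y : E3 => ENNReal.ofReal (green x y * rn n y) :=
          ((green_meas_right x).mul (hrn_meas n)).ennreal_ofReal
        rw [lintegral_const_mul _ hm]
        congr 1
        exact (ofReal_integral_eq_lintegral_ofReal (hcn_int n x)
          (Filter.Eventually.of_forall fun y =>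
            mul_nonneg (green_nonneg x y) (hrn_nonneg n y))).symm
      simp only [hinner]
      have hh2 : ∀ x : E3, ENNReal.ofReal (ln n x) * ENNReal.ofReal (∫ y, green x y * rn n y)
          = ENNReal.ofReal (ln n x * (∫ y, green x y * rn n y)) := fun x =>
        (ENNReal.ofReal_mul (hln_nonneg n x)).symm
      simp only [hh2]
      rw [← ofReal_integral_eq_lintegral_ofReal (hInt_lncn n)
        (Filter.Eventually.of_forall fun x =>
          mul_nonneg (hln_nonneg n x) (hcn_nonneg n x))]
      exact ENNReal.ofReal_le_ofReal (hIle n)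
    constructor
    · have h1 : Measurable fun p : E3 × E3 => conj (uK p.1) :=
        Complex.continuous_conj.measurable.comp (huKm.measurable.comp measurable_fst)
      have h2 : Measurable fun p : E3 × E3 => ((green p.1 p.2 : ℝ) : ℂ) :=
        Complex.measurable_ofReal.comp green_meas
      have h3 : Measurable fun p : E3 × E3 => vK p.2 := hvKm.measurable.comp measurable_snd
      exact ((h1.mul h2).mul h3).aestronglyMeasurable
    · rw [hasFiniteIntegral_iff_norm]
      have heq : ∀ p : E3 × E3, ENNReal.ofReal
          ‖Function.uncurry (fun x y : E3 => conj (uK x) * ((green x y : ℝ) : ℂ) * vK y) p‖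
          = ENNReal.ofReal (‖uK p.1‖) * ENNReal.ofReal (green p.1 p.2)
            * ENNReal.ofReal (‖vK p.2‖) := by
        intro p
        have hn : ‖Function.uncurry (fun x y : E3 => conj (uK x) * ((green x y : ℝ) : ℂ) * vK y) p‖
            = ‖uK p.1‖ * green p.1 p.2 * ‖vK p.2‖ := by
          simp only [Function.uncurry]
          rw [norm_mul, norm_mul, RCLike.norm_conj, Complex.norm_real,
            Real.norm_eq_abs, abs_of_nonneg (green_nonneg _ _)]
        rw [hn, ENNReal.ofReal_mul (mul_nonneg (norm_nonneg _) (green_nonneg _ _)),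
          ENNReal.ofReal_mul (norm_nonneg _)]
      have hsup : ∀ p : E3 × E3, (⨆ n, ENNReal.ofReal (ln n p.1) * ENNReal.ofReal (green p.1 p.2)
          * ENNReal.ofReal (rn n p.2)) = ENNReal.ofReal (‖uK p.1‖)
            * ENNReal.ofReal (green p.1 p.2) * ENNReal.ofReal (‖vK p.2‖) := by
        intro p
        apply le_antisymm
        · refine iSup_le fun n => ?_
          exact mul_le_mul' (mul_le_mul' (ENNReal.ofReal_le_ofReal (hln_le n p.1)) le_rfl)
            (ENNReal.ofReal_le_ofReal (hrn_le n p.2))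
        · obtain ⟨n, hn⟩ := exists_nat_ge (max (max ‖uK p.1‖ ‖p.1‖) (max ‖vK p.2‖ ‖p.2‖))
          refine le_trans (le_of_eq ?_) (le_iSup (fun n => ENNReal.ofReal (ln n p.1)
            * ENNReal.ofReal (green p.1 p.2) * ENNReal.ofReal (rn n p.2)) n)
          have h1 : p.1 ∈ {x : E3 | ‖uK x‖ ≤ (n:ℝ) ∧ ‖x‖ ≤ (n:ℝ)} :=
            ⟨le_trans (le_trans (le_max_left _ _) (le_max_left _ _)) hn,
             le_trans (le_trans (le_max_right _ _) (le_max_left _ _)) hn⟩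
          have h2 : p.2 ∈ {y : E3 | ‖vK y‖ ≤ (n:ℝ) ∧ ‖y‖ ≤ (n:ℝ)} :=
            ⟨le_trans (le_trans (le_max_left _ _) (le_max_right _ _)) hn,
             le_trans (le_trans (le_max_right _ _) (le_max_right _ _)) hn⟩
          simp only [hlndef, hrndef]
          rw [Set.indicator_of_mem h1, Set.indicator_of_mem h2]
      have hmono : Monotone (fun n => (fun p : E3 × E3 => ENNReal.ofReal (ln n p.1)
          * ENNReal.ofReal (green p.1 p.2) * ENNReal.ofReal (rn n p.2))) := by
        intro a b hab p
        have hsub1 : {x : E3 | ‖uK x‖ ≤ (a:ℝ) ∧ ‖x‖ ≤ (a:ℝ)} ⊆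
            {x : E3 | ‖uK x‖ ≤ (b:ℝ) ∧ ‖x‖ ≤ (b:ℝ)} := fun x hx =>
          ⟨hx.1.trans (Nat.cast_le.2 hab), hx.2.trans (Nat.cast_le.2 hab)⟩
        have hsub2 : {y : E3 | ‖vK y‖ ≤ (a:ℝ) ∧ ‖y‖ ≤ (a:ℝ)} ⊆
            {y : E3 | ‖vK y‖ ≤ (b:ℝ) ∧ ‖y‖ ≤ (b:ℝ)} := fun y hy =>
          ⟨hy.1.trans (Nat.cast_le.2 hab), hy.2.trans (Nat.cast_le.2 hab)⟩
        have hl : ln a p.1 ≤ ln b p.1 := by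
          simp only [hlndef]
          by_cases h : p.1 ∈ {x : E3 | ‖uK x‖ ≤ (a:ℝ) ∧ ‖x‖ ≤ (a:ℝ)}
          · rw [Set.indicator_of_mem h, Set.indicator_of_mem (hsub1 h)]
          · rw [Set.indicator_of_notMem h]
            exact Set.indicator_nonneg (fun _ _ => norm_nonneg _) _
        have hr : rn a p.2 ≤ rn b p.2 := by
          simp only [hrndef]
          by_cases h : p.2 ∈ {y : E3 | ‖vK y‖ ≤ (a:ℝ) ∧ ‖y‖ ≤ (a:ℝ)}
          · rw [Set.indicator_of_mem h, Set.indicator_of_mem (hsub2 h)]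
          · rw [Set.indicator_of_notMem h]
            exact Set.indicator_nonneg (fun _ _ => norm_nonneg _) _
        exact mul_le_mul' (mul_le_mul' (ENNReal.ofReal_le_ofReal hl) le_rfl)
          (ENNReal.ofReal_le_ofReal hr)
      calc ∫⁻ p : E3 × E3, ENNReal.ofReal
            ‖Function.uncurry (fun x y : E3 => conj (uK x) * ((green x y : ℝ) : ℂ) * vK y) p‖
            ∂(volume.prod volume)
          = ∫⁻ p : E3 × E3, ⨆ n, ENNReal.ofReal (ln n p.1) * ENNReal.ofReal (green p.1 p.2)
              * ENNReal.ofReal (rn n p.2) ∂(volume.prod volume) := by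
            apply lintegral_congr
            intro p
            rw [heq p, ← hsup p]
        _ = ⨆ n, ∫⁻ p : E3 × E3, ENNReal.ofReal (ln n p.1) * ENNReal.ofReal (green p.1 p.2)
              * ENNReal.ofReal (rn n p.2) ∂(volume.prod volume) :=
            lintegral_iSup (fun n => hGnmeas n) hmono
        _ ≤ ENNReal.ofReal (‖f‖ * (‖X‖ * ‖g‖)) := iSup_le hkey
        _ < ⊤ := ENNReal.ofReal_lt_top
  have hswap : (∫ x : E3, conj (uK x) * ∫ y : E3, ((green x y :ℝ):ℂ) * (vK y)) =
      ∫ y : E3, ∫ x : E3, conj (uK x) * ((green x y : ℝ) : ℂ) * (vK y) := by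
    rw [← integral_integral_swap hFin]
    apply integral_congr_ae
    refine Filter.Eventually.of_forall fun x => ?_
    beta_reduce
    rw [← integral_const_mul]
    apply integral_congr_ae
    refine Filter.Eventually.of_forall fun y => ?_
    beta_reduce
    ring
  have hconjA : ∀ x : E3, conj (∫ y : E3, ((green x y :ℝ):ℂ) * (uK y)) =
      ∫ y : E3, ((green x y :ℝ):ℂ) * conj (uK y) := by
    intro x
    rw [← integral_conj]
    apply integral_congr_ae
    refine Filter.Eventually.of_forall fun y => ?_
    beta_reduce
    rw [map_mul, Complex.conj_ofReal]
  have h3 : conj (inner ℂ g (X f) : ℂ) = (inner ℂ f (X g) : ℂ) := by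
    rw [h1, h2]
    calc conj (∫ x : E3, conj (vK x) * ∫ y : E3, ((green x y :ℝ):ℂ) * (uK y))
        = ∫ x : E3, conj (conj (vK x) * ∫ y : E3, ((green x y :ℝ):ℂ) * (uK y)) :=
          integral_conj.symm
      _ = ∫ x : E3, ∫ y : E3, conj (uK y) * ((green y x : ℝ) : ℂ) * (vK x) := by
          apply integral_congr_ae
          refine Filter.Eventually.of_forall fun x => ?_
          beta_reduce
          rw [map_mul, Complex.conj_conj, hconjA x, ← integral_const_mul]
          apply integral_congr_ae
          refine Filter.Eventually.of_forall fun y => ?_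
          beta_reduce
          rw [green_symm x y]
          ring
      _ = ∫ x : E3, conj (uK x) * ∫ y : E3, ((green x y :ℝ):ℂ) * (vK y) :=
          hswap.symm
  rw [← h3, Complex.conj_re]

lemma innerZeroAE (a b : L2) (hb : ∀ᵐ x : E3, b x = 0) : (inner ℂ a b : ℂ) = 0 := by
  rw [MeasureTheory.L2.inner_def]
  have h : (fun x : E3 => (inner ℂ (a x) (b x) : ℂ)) =ᵐ[volume] (fun _ => 0) := by
    filter_upwards [hb] with x hx
    rw [RCLike.inner_apply', hx, mul_zero]
  rw [integral_congr_ae h, integral_zero]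


/-- In the Birman–Schwinger setting, if `φ = φ₊ + φ₋` with `supp φ₋ ⊆ supp V₋` and
`supp φ₊ ∩ supp V₋ = ∅`, then
`‖(J+X)φ‖ (‖φ₊‖ + ‖φ₋‖) ≥ ⟨φ₊, (1+X₊)φ₊⟩ + ⟨φ₋, (1-X₋)φ₋⟩`. -/
theorem stmt2 (Vp Vm : E3 → ℝ)
    (hVp : ∀ x, 0 ≤ Vp x) (hVm : ∀ x, 0 ≤ Vm x)
    (hdisj : ∀ x, Vp x = 0 ∨ Vm x = 0)
    (J X Xp Xm : L2 →L[ℂ] L2)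
    (hJ : ∀ φ : L2, ∀ᵐ x : E3, J φ x =
      (if 0 ≤ Vp x - Vm x then (1 : ℂ) else -1) * φ x)
    (hX : ∀ φ : L2, ∀ᵐ x : E3, X φ x =
      ∫ y : E3, ((Real.sqrt |Vp x - Vm x| * green x y * Real.sqrt |Vp y - Vm y| : ℝ) : ℂ) * φ y)
    (hXp : ∀ φ : L2, ∀ᵐ x : E3, Xp φ x =
      ∫ y : E3, ((Real.sqrt (Vp x) * green x y * Real.sqrt (Vp y) : ℝ) : ℂ) * φ y)
    (hXm : ∀ φ : L2, ∀ᵐ x : E3, Xm φ x =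
      ∫ y : E3, ((Real.sqrt (Vm x) * green x y * Real.sqrt (Vm y) : ℝ) : ℂ) * φ y)
    (φ φp φm : L2)
    (hsum : φ = φp + φm)
    (hsuppm : ∀ᵐ x : E3, Vm x = 0 → φm x = 0)
    (hsuppp : ∀ᵐ x : E3, Vm x ≠ 0 → φp x = 0) :
    (inner ℂ φp ((1 + Xp) φp) : ℂ).re + (inner ℂ φm ((1 - Xm) φm) : ℂ).re ≤
      ‖(J + X) φ‖ * (‖φp‖ + ‖φm‖) := by
  classical
  have hsp_eq : ∀ x : E3, Vm x = 0 → Real.sqrt |Vp x - Vm x| = Real.sqrt (Vp x) := by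
    intro x h; rw [h, sub_zero, abs_of_nonneg (hVp x)]
  have hsm_eq : ∀ x : E3, Vm x ≠ 0 → Real.sqrt |Vp x - Vm x| = Real.sqrt (Vm x) := by
    intro x h
    rcases hdisj x with hp | hm
    · rw [hp, zero_sub, abs_neg, abs_of_nonneg (hVm x)]
    · exact absurd hm h
  have hφ : (φ : E3 → ℂ) =ᵐ[volume] (fun x => φp x + φm x) := by
    rw [hsum]; exact Lp.coeFn_add φp φm
  -- the J part
  have hE1 : (inner ℂ (φp - φm) (J φ) : ℂ) = (inner ℂ φp φp : ℂ) + (inner ℂ φm φm : ℂ) := by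
    rw [MeasureTheory.L2.inner_def, MeasureTheory.L2.inner_def, MeasureTheory.L2.inner_def,
      ← integral_add (L2.integrable_inner _ _) (L2.integrable_inner _ _)]
    apply integral_congr_ae
    filter_upwards [hJ φ, hφ, Lp.coeFn_sub φp φm, hsuppm, hsuppp] with x h1 h2 h3 h4 h5
    beta_reduce
    rw [RCLike.inner_apply', RCLike.inner_apply', RCLike.inner_apply', h3, h1, h2]
    simp only [Pi.sub_apply]
    by_cases hVmx : Vm x = 0
    · rw [if_pos (by rw [hVmx, sub_zero]; exact hVp x), h4 hVmx]
      ring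
    · have hVp0 : Vp x = 0 := by
        rcases hdisj x with hp | hm
        · exact hp
        · exact absurd hm hVmx
      have hVmpos : 0 < Vm x := lt_of_le_of_ne (hVm x) (Ne.symm hVmx)
      rw [if_neg (by rw [hVp0, zero_sub]; simpa using hVmpos), h5 hVmx]
      simp only [zero_sub, zero_add, map_neg, map_zero]
      ring
  -- I1
  have hXφp : ∀ᵐ x : E3, X φp x = ((Real.sqrt |Vp x - Vm x| : ℝ) : ℂ) *
      ∫ y : E3, ((green x y :ℝ):ℂ) * (((Real.sqrt (Vp y):ℝ):ℂ) * φp y) := by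
    filter_upwards [hX φp] with x hx
    rw [hx, kernel_pull]
    congr 1
    apply integral_congr_ae
    filter_upwards [hsuppp] with y hy
    by_cases hVmy : Vm y = 0
    · rw [hsp_eq y hVmy]
    · rw [hy hVmy]
      simp
  have hXpφp : ∀ᵐ x : E3, Xp φp x = ((Real.sqrt (Vp x) : ℝ) : ℂ) *
      ∫ y : E3, ((green x y :ℝ):ℂ) * (((Real.sqrt (Vp y):ℝ):ℂ) * φp y) := by
    filter_upwards [hXp φp] with x hx
    rw [hx, kernel_pull]
  have hI1 : (inner ℂ φp (X φp) : ℂ) = (inner ℂ φp (Xp φp) : ℂ) := by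
    rw [MeasureTheory.L2.inner_def, MeasureTheory.L2.inner_def]
    apply integral_congr_ae
    filter_upwards [hXφp, hXpφp, hsuppp] with x h1 h2 h3
    rw [RCLike.inner_apply', RCLike.inner_apply', h1, h2]
    by_cases hVmx : Vm x = 0
    · rw [hsp_eq x hVmx]
    · rw [h3 hVmx]
      simp
  -- I2
  have hXφm : ∀ᵐ x : E3, X φm x = ((Real.sqrt |Vp x - Vm x| : ℝ) : ℂ) *
      ∫ y : E3, ((green x y :ℝ):ℂ) * (((Real.sqrt (Vm y):ℝ):ℂ) * φm y) := by
    filter_upwards [hX φm] with x hx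
    rw [hx, kernel_pull]
    congr 1
    apply integral_congr_ae
    filter_upwards [hsuppm] with y hy
    by_cases hVmy : Vm y = 0
    · rw [hy hVmy]
      simp
    · rw [hsm_eq y hVmy]
  have hXmφm : ∀ᵐ x : E3, Xm φm x = ((Real.sqrt (Vm x) : ℝ) : ℂ) *
      ∫ y : E3, ((green x y :ℝ):ℂ) * (((Real.sqrt (Vm y):ℝ):ℂ) * φm y) := by
    filter_upwards [hXm φm] with x hx
    rw [hx, kernel_pull]
  have hI2 : (inner ℂ φm (X φm) : ℂ) = (inner ℂ φm (Xm φm) : ℂ) := by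
    rw [MeasureTheory.L2.inner_def, MeasureTheory.L2.inner_def]
    apply integral_congr_ae
    filter_upwards [hXφm, hXmφm, hsuppm] with x h1 h2 h3
    rw [RCLike.inner_apply', RCLike.inner_apply', h1, h2]
    by_cases hVmx : Vm x = 0
    · rw [h3 hVmx]
      simp
    · rw [hsm_eq x hVmx]
  -- the cross terms
  have hXφ_add : (X φ : L2) = X φp + X φm := by rw [hsum, map_add]
  have hcross : (inner ℂ φp (X φm) : ℂ).re = (inner ℂ φm (X φp) : ℂ).re := by
    by_cases hmp : AEStronglyMeasurable
        (fun x : E3 => ((Real.sqrt |Vp x - Vm x| : ℝ) : ℂ) * φp x) volume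
    · by_cases hmm : AEStronglyMeasurable
          (fun x : E3 => ((Real.sqrt |Vp x - Vm x| : ℝ) : ℂ) * φm x) volume
      · exact inner_green_symm (fun x => Real.sqrt |Vp x - Vm x|)
          (fun x => Real.sqrt_nonneg _) X hX φp φm hmp hmm
      · have h1 : ∀ᵐ x : E3, X φm x = 0 := Xzero _ X φm (hX φm) hmm
        have h2 : ¬ AEStronglyMeasurable
            (fun x : E3 => ((Real.sqrt |Vp x - Vm x| : ℝ) : ℂ) * φ x) volume := by
          intro hcon
          apply hmm
          have he : (fun x : E3 => ((Real.sqrt |Vp x - Vm x| : ℝ) : ℂ) * φm x) =ᵐ[volume]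
              (fun x : E3 => ((Real.sqrt |Vp x - Vm x| : ℝ) : ℂ) * φ x
                - ((Real.sqrt |Vp x - Vm x| : ℝ) : ℂ) * φp x) := by
            filter_upwards [hφ] with x hx
            beta_reduce
            rw [hx]
            ring
          exact (hcon.sub hmp).congr he.symm
        have h3 : ∀ᵐ x : E3, X φ x = 0 := Xzero _ X φ (hX φ) h2
        have h4 : ∀ᵐ x : E3, X φp x = 0 := by
          have hadd : (X φ : E3 → ℂ) =ᵐ[volume] (fun x => X φp x + X φm x) := by
            rw [hXφ_add]; exact Lp.coeFn_add _ _
          filter_upwards [h3, h1, hadd] with x a b c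
          rw [a, b] at c
          simpa using c.symm
        rw [innerZeroAE φp (X φm) h1, innerZeroAE φm (X φp) h4]
    · have h1 : ∀ᵐ x : E3, X φp x = 0 := Xzero _ X φp (hX φp) hmp
      have h5 : ∀ᵐ x : E3, X φm x = 0 := by
        by_cases hmm : AEStronglyMeasurable
            (fun x : E3 => ((Real.sqrt |Vp x - Vm x| : ℝ) : ℂ) * φm x) volume
        · have h2 : ¬ AEStronglyMeasurable
              (fun x : E3 => ((Real.sqrt |Vp x - Vm x| : ℝ) : ℂ) * φ x) volume := by
            intro hcon
            apply hmp
            have he : (fun x : E3 => ((Real.sqrt |Vp x - Vm x| : ℝ) : ℂ) * φp x) =ᵐ[volume]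
                (fun x : E3 => ((Real.sqrt |Vp x - Vm x| : ℝ) : ℂ) * φ x
                  - ((Real.sqrt |Vp x - Vm x| : ℝ) : ℂ) * φm x) := by
              filter_upwards [hφ] with x hx
              beta_reduce
              rw [hx]
              ring
            exact (hcon.sub hmm).congr he.symm
          have h3 : ∀ᵐ x : E3, X φ x = 0 := Xzero _ X φ (hX φ) h2
          have hadd : (X φ : E3 → ℂ) =ᵐ[volume] (fun x => X φp x + X φm x) := by
            rw [hXφ_add]; exact Lp.coeFn_add _ _
          filter_upwards [h3, h1, hadd] with x a b c
          rw [a, b] at c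
          simpa using c.symm
        · exact Xzero _ X φm (hX φm) hmm
      rw [innerZeroAE φp (X φm) h5, innerZeroAE φm (X φp) h1]
  -- the X part
  have hre2 : (inner ℂ (φp - φm) (X φ) : ℂ).re =
      (inner ℂ φp (Xp φp) : ℂ).re - (inner ℂ φm (Xm φm) : ℂ).re := by
    have hsplit : (inner ℂ (φp - φm) (X φ) : ℂ) =
        (inner ℂ φp (X φp) : ℂ) + (inner ℂ φp (X φm) : ℂ)
        - ((inner ℂ φm (X φp) : ℂ) + (inner ℂ φm (X φm) : ℂ)) := by
      rw [hXφ_add, inner_sub_left, inner_add_right, inner_add_right]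
    rw [hsplit, hI1, hI2]
    simp only [Complex.sub_re, Complex.add_re]
    linarith [hcross]
  -- assembling
  have goal_eq : (inner ℂ φp ((1 + Xp) φp) : ℂ).re + (inner ℂ φm ((1 - Xm) φm) : ℂ).re
      = (inner ℂ (φp - φm) ((J + X) φ) : ℂ).re := by
    have e1 : ((1 + Xp) φp : L2) = φp + Xp φp := by
      rw [ContinuousLinearMap.add_apply, ContinuousLinearMap.one_apply]
    have e2 : ((1 - Xm) φm : L2) = φm - Xm φm := by
      rw [ContinuousLinearMap.sub_apply, ContinuousLinearMap.one_apply]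
    have e3 : ((J + X) φ : L2) = J φ + X φ := ContinuousLinearMap.add_apply J X φ
    rw [e1, e2, e3, inner_add_right, inner_sub_right, inner_add_right]
    simp only [Complex.add_re, Complex.sub_re]
    have hru : (inner ℂ (φp - φm) (J φ) : ℂ).re
        = (inner ℂ φp φp : ℂ).re + (inner ℂ φm φm : ℂ).re := by
      rw [hE1, Complex.add_re]
    linarith [hre2, hru]
  rw [goal_eq]
  calc (inner ℂ (φp - φm) ((J + X) φ) : ℂ).re
      ≤ ‖φp - φm‖ * ‖(J + X) φ‖ := by
        have h := re_inner_le_norm (𝕜 := ℂ) (φp - φm) ((J + X) φ)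
        rwa [RCLike.re_to_complex] at h
    _ ≤ (‖φp‖ + ‖φm‖) * ‖(J + X) φ‖ :=
        mul_le_mul_of_nonneg_right (norm_sub_le _ _) (norm_nonneg _)
    _ = ‖(J + X) φ‖ * (‖φp‖ + ‖φm‖) := mul_comm _ _
end
end
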